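/- arXiv:2403.04972 — 4 statements merged into one kernel-verified Lean document; each statement's English description precedes it below -/
import Mathlib

section
/- Let S be an integrally closed domain such that char(Frac(S)) = 0 and suppose the prime integer p is a prime element of S. Then for every positive integer r the cyclotomic polynomial Φ_{p^r}(x) ∈ ℤ[x] is irreducible in S[x]. -/
open IsLocalRing

universe u v w x

noncomputable section

/-- The depth of a module with respect to an ideal: supremum of lengths of regular
sequences contained in the ideal. -/
def moduleDepth (R : Type*) [CommRing R] (I : Ideal R) (M : Type*) [AddCommGroup M]
    [Module R M] : ℕ∞ :=
  sSup {n : ℕ∞ | ∃ rs : List R, (∀ r ∈ rs, r ∈ I) ∧ RingTheory.Sequence.IsRegular M rs ∧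
    (rs.length : ℕ∞) = n}

/-- The depth of a ring with respect to an ideal. -/
def ringDepth (R : Type*) [CommRing R] (I : Ideal R) : ℕ∞ := moduleDepth R I R

/-- A Noetherian local ring is Cohen-Macaulay if its depth equals its Krull dimension. -/
def IsCohenMacaulayLocalRing (R : Type*) [CommRing R] [IsLocalRing R] : Prop :=
  IsNoetherianRing R ∧ (ringDepth R (maximalIdeal R) : WithBot ℕ∞) = ringKrullDim R

/-- A Noetherian ring is Cohen-Macaulay if its localization at every maximal ideal is
Cohen-Macaulay. -/
def IsCohenMacaulayRing (R : Type*) [CommRing R] : Prop :=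
  IsNoetherianRing R ∧ ∀ (P : Ideal R) (hP : P.IsMaximal),
    letI := hP.isPrime
    IsCohenMacaulayLocalRing (Localization.AtPrime P)

/-- A regular local ring: a Noetherian local ring whose maximal ideal is generated by
as many elements as the Krull dimension. -/
def IsRegularLocalRing' (R : Type*) [CommRing R] : Prop :=
  IsNoetherianRing R ∧ ∃ h : IsLocalRing R,
    letI := h
    ∃ s : Finset R, Ideal.span (s : Set R) = maximalIdeal R ∧
      ((s.card : ℕ∞) : WithBot ℕ∞) = ringKrullDim R

/-- A regular semi-local ring: Noetherian with finitely many maximal ideals, whose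
localization at every maximal ideal is a regular local ring. -/
def IsRegularSemiLocalRing (R : Type*) [CommRing R] : Prop :=
  IsNoetherianRing R ∧ {I : Ideal R | I.IsMaximal}.Finite ∧
    ∀ (P : Ideal R) (hP : P.IsMaximal),
      letI := hP.isPrime
      IsRegularLocalRing' (Localization.AtPrime P)

/-- A regular ring: Noetherian whose localization at every prime is regular local. -/
def IsRegularRing' (R : Type*) [CommRing R] : Prop :=
  IsNoetherianRing R ∧ ∀ (P : Ideal R) (hP : P.IsPrime),
    letI := hP
    IsRegularLocalRing' (Localization.AtPrime P)

/-- Height of a prime ideal. -/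
def idealHeight {R : Type*} [CommRing R] (P : Ideal R) (hP : P.IsPrime) : ℕ∞ :=
  Order.height (⟨P, hP⟩ : PrimeSpectrum R)

/-- The order of an element of a local ring: the largest `m` with `x ∈ 𝔪^m`. -/
def ordLocal (R : Type*) [CommRing R] [IsLocalRing R] (x : R) : ℕ∞ :=
  sSup {n : ℕ∞ | ∃ m : ℕ, (m : ℕ∞) = n ∧ x ∈ maximalIdeal R ^ m}

/-- The order of an element of a ring at a prime ideal `Q`: its order in the
localization at `Q`. -/
def ordAt {S : Type*} [CommRing S] (Q : Ideal S) (hQ : Q.IsPrime) (x : S) : ℕ∞ :=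
  letI := hQ
  ordLocal (Localization.AtPrime Q) (algebraMap S (Localization.AtPrime Q) x)

/-- `Γ_I(f, n)`: the supremum of all `m ≥ 0` such that `X^n - f` has a root in `S/I^m`. -/
def Gamma {S : Type*} [CommRing S] (I : Ideal S) (f : S) (n : ℕ) : ℕ∞ :=
  sSup {m : ℕ∞ | ∃ k : ℕ, (k : ℕ∞) = m ∧
    ∃ g : S, Ideal.Quotient.mk (I ^ k) (g ^ n) = Ideal.Quotient.mk (I ^ k) f}

/-- `Γ_{Q S_Q}(f, n)` for a prime `Q`. -/
def GammaAt {S : Type*} [CommRing S] (Q : Ideal S) (hQ : Q.IsPrime) (f : S) (n : ℕ) : ℕ∞ :=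
  letI := hQ
  Gamma (maximalIdeal (Localization.AtPrime Q))
    (algebraMap S (Localization.AtPrime Q) f) n

/-- A map of rings is `p`-unramified if it is étale in codimension one over `p`,
i.e. `S_P → R_P` is étale for every height one prime `P ⊆ S` containing `p`. -/
def PUnramifiedMap (p : ℕ) (S R : Type u) [CommRing S] [CommRing R] [Algebra S R] : Prop :=
  ∀ (P : Ideal S) (hP : P.IsPrime), (p : S) ∈ P → idealHeight P hP = 1 →
    letI := hP
    letI : Algebra (Localization.AtPrime P)
        (Localization (Algebra.algebraMapSubmonoid R P.primeCompl)) :=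
      localizationAlgebra P.primeCompl R
    Algebra.Etale (Localization.AtPrime P)
      (Localization (Algebra.algebraMapSubmonoid R P.primeCompl))

/-- A local homomorphism of (one-dimensional) local rings is tamely ramified if the residue
field extension is separable and the order of a uniformizer of the source is coprime to the
residue characteristic. -/
def IsTamelyRamifiedLocalHom (V₁ V₂ : Type*) [CommRing V₁] [CommRing V₂]
    [IsLocalRing V₁] [IsLocalRing V₂] (φ : V₁ →+* V₂) : Prop :=
  ∃ h : IsLocalHom φ,
    letI := h
    (letI : Algebra (ResidueField V₁) (ResidueField V₂) := (ResidueField.map φ).toAlgebra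
     Algebra.IsSeparable (ResidueField V₁) (ResidueField V₂)) ∧
    ∀ π : V₁, maximalIdeal V₁ = Ideal.span {π} →
      ∃ e : ℕ, ordLocal V₂ (φ π) = (e : ℕ∞) ∧ ¬ (ringChar (ResidueField V₁) ∣ e)

/-- A module-finite map of normal domains is tamely `p`-ramified if for every height one
prime `Q` of `R` containing `p`, the induced map `S_{Q ∩ S} → R_Q` is tamely ramified. -/
def TamelyPRamifiedMap (p : ℕ) (S R : Type*) [CommRing S] [CommRing R] [Algebra S R] : Prop :=
  ∀ (Q : Ideal R) (hQ : Q.IsPrime), (p : R) ∈ Q → idealHeight Q hQ = 1 →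
    letI := hQ
    letI : (Q.comap (algebraMap S R)).IsPrime := hQ.comap _
    IsTamelyRamifiedLocalHom (Localization.AtPrime (Q.comap (algebraMap S R)))
      (Localization.AtPrime Q)
      (Localization.localRingHom (Q.comap (algebraMap S R)) Q (algebraMap S R) rfl)

/-- The map from `S` to the normalization of an `S`-algebra domain `A`
(the integral closure of `A` in its fraction ring) is `p`-unramified. -/
def NormalizationPUnramified (p : ℕ) (S : Type u) [CommRing S] (A : Type u) [CommRing A]
    [Algebra S A] : Prop :=
  letI : Algebra S ↥(integralClosure A (FractionRing A)) :=
    ((algebraMap A ↥(integralClosure A (FractionRing A))).comp (algebraMap S A)).toAlgebra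
  PUnramifiedMap p S ↥(integralClosure A (FractionRing A))

/-- The map from `S` to the normalization of an `S`-algebra domain `A` is tamely
`p`-ramified. -/
def NormalizationTamelyPRamified (p : ℕ) (S : Type u) [CommRing S] (A : Type u) [CommRing A]
    [Algebra S A] : Prop :=
  letI : Algebra S ↥(integralClosure A (FractionRing A)) :=
    ((algebraMap A ↥(integralClosure A (FractionRing A))).comp (algebraMap S A)).toAlgebra
  TamelyPRamifiedMap p S ↥(integralClosure A (FractionRing A))

/-- `f ∈ S` is `p`-unramified over `n` if for some root `ω` of `X^n - f` (in a fixed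
extension `Ω` of the fraction field of `S`), the map from `S` to the normalization of
`S[ω]` is `p`-unramified. -/
def ElemPUnramified (p n : ℕ) {S : Type u} [CommRing S] (Ω : Type u) [CommRing Ω]
    [Algebra S Ω] (f : S) : Prop :=
  ∃ ω : Ω, ω ^ n = algebraMap S Ω f ∧
    NormalizationPUnramified p S ↥(Algebra.adjoin S {ω})

/-- `f ∈ S` is tamely `p`-ramified over `n`. -/
def ElemTamelyPRamified (p n : ℕ) {S : Type u} [CommRing S] (Ω : Type u) [CommRing Ω]
    [Algebra S Ω] (f : S) : Prop :=
  ∃ ω : Ω, ω ^ n = algebraMap S Ω f ∧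
    NormalizationTamelyPRamified p S ↥(Algebra.adjoin S {ω})

/-- An element `x` of a ring is square free if `Q S_Q = x S_Q` for every height one
prime `Q` containing `x`. -/
def IsSquarefreeElem {A : Type*} [CommRing A] (x : A) : Prop :=
  ∀ (Q : Ideal A) (hQ : Q.IsPrime), x ∈ Q → idealHeight Q hQ = 1 →
    Ideal.map (algebraMap A (Localization.AtPrime Q)) Q =
      Ideal.span {algebraMap A (Localization.AtPrime Q) x}

/-- A canonical element of `K/L` in `S` (with respect to exponent `n`): a nonzero element
of `S` which is an `n`-th power in `K` but not in `L` (i.e. represents a nontrivial coset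
of the Kummer subgroup) and whose order at each of its prime divisors is at most `n`. -/
def IsCanonicalElement (S L K : Type*) [CommRing S] [CommRing L] [CommRing K]
    [Algebra S L] [Algebra S K] (n : ℕ) (f : S) : Prop :=
  f ≠ 0 ∧ (∃ y : K, y ^ n = algebraMap S K f) ∧ (¬ ∃ y : L, y ^ n = algebraMap S L f) ∧
    ∀ q : S, Prime q → q ∣ f → ¬ (q ^ (n + 1) ∣ f)

/-- A canonical divisor of `K/L` in `S`: a (height one) prime of `S` generated by a prime
factor of some canonical element. -/
def IsCanonicalDivisor (S L K : Type*) [CommRing S] [CommRing L] [CommRing K]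
    [Algebra S L] [Algebra S K] (n : ℕ) (P : Ideal S) : Prop :=
  ∃ f q : S, IsCanonicalElement S L K n f ∧ Prime q ∧ q ∣ f ∧ P = Ideal.span {q}

/-- `S → R` is unramified at the prime `P` of `S`: for every prime `Q` of `R` lying over
`P`, `P R_Q = Q R_Q` and the induced residue field extension is finite separable. -/
def UnramifiedAtPrime (S R : Type*) [CommRing S] [CommRing R] [Algebra S R]
    (P : Ideal S) : Prop :=
  ∀ (Q : Ideal R) (hQ : Q.IsPrime), Q.comap (algebraMap S R) = P →
    letI := hQ
    letI : (Q.comap (algebraMap S R)).IsPrime := hQ.comap _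
    (Ideal.map ((algebraMap R (Localization.AtPrime Q)).comp (algebraMap S R))
        (Q.comap (algebraMap S R)) =
      Ideal.map (algebraMap R (Localization.AtPrime Q)) Q) ∧
    (letI : Algebra (ResidueField (Localization.AtPrime (Q.comap (algebraMap S R))))
        (ResidueField (Localization.AtPrime Q)) :=
      (ResidueField.map
        (Localization.localRingHom (Q.comap (algebraMap S R)) Q (algebraMap S R) rfl)).toAlgebra
     Module.Finite (ResidueField (Localization.AtPrime (Q.comap (algebraMap S R))))
        (ResidueField (Localization.AtPrime Q)) ∧
     Algebra.IsSeparable (ResidueField (Localization.AtPrime (Q.comap (algebraMap S R))))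
        (ResidueField (Localization.AtPrime Q)))

/-- A Noetherian ring `R` admits a small Cohen-Macaulay algebra if there is an injective
module-finite ring map `R → T` with `T` Cohen-Macaulay. -/
def AdmitsSmallCMAlgebra (R : Type u) [CommRing R] : Prop :=
  ∃ (T : Type u) (_ : CommRing T) (_ : Algebra R T),
    Function.Injective (algebraMap R T) ∧ Module.Finite R T ∧ IsCohenMacaulayRing T

/-- A finitely generated module `M` over a Noetherian ring is maximal Cohen-Macaulay if
for every maximal ideal `𝔪`, the localization `M_𝔪` has depth `dim R_𝔪`. -/
def IsMaximalCohenMacaulay (R : Type*) [CommRing R] (M : Type*) [AddCommGroup M]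
    [Module R M] : Prop :=
  Module.Finite R M ∧ ∀ (P : Ideal R) (hP : P.IsMaximal),
    letI := hP.isPrime
    (moduleDepth (Localization.AtPrime P) (maximalIdeal (Localization.AtPrime P))
        (LocalizedModule P.primeCompl M) : WithBot ℕ∞) =
      ringKrullDim (Localization.AtPrime P)

end


open Polynomial

/-- If `S` is an integrally closed domain with `char (Frac S) = 0` in which the prime
integer `p` is a prime element, then the cyclotomic polynomial `Φ_{p^r}` is irreducible
over `S`. -/
theorem cyclotomic_prime_pow_irreducible
    (S : Type u) [CommRing S] [IsDomain S] [IsIntegrallyClosed S] [CharZero S]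
    (p : ℕ) (hp : p.Prime) (hps : Prime (p : S)) (r : ℕ) (hr : 0 < r) :
    Irreducible (Polynomial.cyclotomic (p ^ r) S) := by
  haveI : Fact p.Prime := ⟨hp⟩
  obtain ⟨n, rfl⟩ : ∃ n, r = n + 1 := ⟨r - 1, (Nat.succ_pred_eq_of_pos hr).symm⟩
  set φ := Int.castRingHom S
  have hpS : (p : S) ≠ 0 := Nat.cast_ne_zero.2 hp.ne_zero
  set gZ : ℤ[X] := (cyclotomic (p ^ (n + 1)) ℤ).comp (X + 1) with hgZ
  have hmZ : gZ.Monic := by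
    rw [hgZ, show (X + 1 : ℤ[X]) = X + C 1 by simp]
    exact (cyclotomic.monic _ ℤ).comp_X_add_C 1
  have hmap : (cyclotomic (p ^ (n + 1)) S).comp (X + 1) = gZ.map φ := by
    rw [hgZ, Polynomial.map_comp, map_cyclotomic, Polynomial.map_add, Polynomial.map_X,
      Polynomial.map_one]
  have hEZ := cyclotomic_prime_pow_comp_X_add_one_isEisensteinAt p n
  have hmS : ((cyclotomic (p ^ (n + 1)) S).comp (X + 1)).Monic := by
    rw [hmap]; exact hmZ.map φ
  have hdeg : ((cyclotomic (p ^ (n + 1)) S).comp (X + 1)).natDegree = gZ.natDegree := by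
    rw [hmap, hmZ.natDegree_map]
  have hprime : (Ideal.span {(p : S)}).IsPrime :=
    (Ideal.span_singleton_prime hpS).2 hps
  have hE : ((cyclotomic (p ^ (n + 1)) S).comp (X + 1)).IsEisensteinAt (Ideal.span {(p : S)}) := by
    refine hmS.isEisensteinAt_of_mem_of_notMem hprime.ne_top (fun {i} hi => ?_) ?_
    · rw [hdeg] at hi
      have := hEZ.mem hi
      rw [Ideal.submodule_span_eq, Ideal.mem_span_singleton] at this
      obtain ⟨k, hk⟩ := this
      rw [hmap, Polynomial.coeff_map, hk, Ideal.mem_span_singleton, map_mul]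
      exact ⟨φ k, by simp [φ, mul_comm]⟩
    · have h0 : ((cyclotomic (p ^ (n + 1)) S).comp (X + 1)).coeff 0 = (p : S) := by
        rw [hmap, Polynomial.coeff_map, hgZ, coeff_zero_eq_eval_zero, eval_comp, eval_add,
          eval_X, eval_one, zero_add, eval_one_cyclotomic_prime_pow]
        exact map_natCast φ p
      rw [h0, Ideal.span_singleton_pow, Ideal.mem_span_singleton]
      rintro ⟨k, hk⟩
      rw [sq, mul_assoc] at hk
      nth_rewrite 1 [← mul_one ((p : S))] at hk
      exact hps.not_isUnit (IsUnit.of_mul_eq_one k (mul_left_cancel₀ hpS hk).symm)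
  have hirr : Irreducible ((cyclotomic (p ^ (n + 1)) S).comp (X + 1)) := by
    refine hE.irreducible hprime hmS.isPrimitive ?_
    rw [hdeg, hgZ, natDegree_comp, show (X + 1 : ℤ[X]) = X + C 1 by simp, natDegree_X_add_C,
      mul_one, natDegree_cyclotomic]
    exact Nat.totient_pos.2 (pow_pos hp.pos _)
  have : Irreducible ((algEquivAevalXAddC (1 : S)) (cyclotomic (p ^ (n + 1)) S)) := by
    simpa [algEquivAevalXAddC, algEquivOfCompEqX, ← Polynomial.comp_eq_aeval] using hirr
  exact this.of_map
end

section
/- Let S be a domain and for each 1 ≤ i ≤ n let S ↪ R_i be a module-finite extension of domains, such that the tensor product R_1 ⊗_S ⋯ ⊗_S R_n is a torsion-free S-module. Fix embeddings of the R_i into a fixed algebraic closure of Frac(S) and let V be the join of the R_i, i.e. the S-subalgebra generated by the images of all the R_i. Assume that the degree over Frac(S) of the compositum Frac(R_1)⋯Frac(R_n) equals the product of the degrees [Frac(R_j) : Frac(S)] for j = 1, …, n. Then V ≅ R_1 ⊗_S ⋯ ⊗_S R_n as S-algebras. -/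
open IsLocalRing

universe u v w x

set_option maxHeartbeats 1000000 in
set_option synthInstance.maxHeartbeats 400000 in
open scoped TensorProduct in
/-- If the degree of the compositum equals the product of the degrees, the join of the
`R i` inside an algebraic closure is isomorphic to their tensor product over `S`. -/
theorem join_iso_tensorProduct
    (S : Type u) [CommRing S] [IsDomain S]
    (L : Type u) [Field L] [Algebra S L] [IsFractionRing S L]
    (Ω : Type u) [Field Ω] [Algebra S Ω] [Algebra L Ω] [IsScalarTower S L Ω]
    [IsAlgClosure L Ω]
    (n : ℕ) (R : Fin n → Type u) [∀ i, CommRing (R i)] [∀ i, IsDomain (R i)]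
    [∀ i, Algebra S (R i)] [∀ i, Module.Finite S (R i)]
    (hinj : ∀ i, Function.Injective (algebraMap S (R i)))
    (htf : ∀ (a : S) (x : ⨂[S] i, R i), a • x = 0 → a = 0 ∨ x = 0)
    (f : ∀ i, R i →ₐ[S] Ω) (hfinj : ∀ i, Function.Injective ⇑(f i))
    (hdeg : Module.finrank L ↥(IntermediateField.adjoin L (⋃ i, Set.range ⇑(f i))) =
      ∏ i, Module.finrank L ↥(IntermediateField.adjoin L (Set.range ⇑(f i)))) :
    Nonempty ((⨂[S] i, R i) ≃ₐ[S] ↥(Algebra.adjoin S (⋃ i, Set.range ⇑(f i)))) := by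
    classical
  -- the product multilinear map and the induced algebra map on the tensor product
  set U : Set Ω := ⋃ i, Set.range ⇑(f i) with hUdef
  let mlin : MultilinearMap S R Ω :=
    (MultilinearMap.mkPiAlgebra S (Fin n) Ω).compLinearMap fun i => (f i).toLinearMap
  have mlin_apply : ∀ x : ∀ i, R i, mlin x = ∏ i, f i (x i) := fun x => by
    simp [mlin]
  let φ : (⨂[S] i, R i) →ₐ[S] Ω :=
    PiTensorProduct.liftAlgHom mlin
      (by rw [mlin_apply]; simp)
      (fun x y => by
        rw [mlin_apply, mlin_apply, mlin_apply]
        simp only [Pi.mul_apply, map_mul]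
        exact Finset.prod_mul_distrib)
  have φ_tprod : ∀ x : ∀ i, R i, φ (PiTensorProduct.tprod S x) = ∏ i, f i (x i) := fun x => by
    have : φ (PiTensorProduct.tprod S x) = PiTensorProduct.lift mlin (PiTensorProduct.tprod S x) :=
      rfl
    rw [this, PiTensorProduct.lift.tprod, mlin_apply]
  have hφsingle : ∀ (i) (r : R i), φ (PiTensorProduct.tprod S (Pi.mulSingle i r)) = f i r := by
    intro i r
    rw [φ_tprod]
    rw [Finset.prod_eq_single i (fun j _ hj => by rw [Pi.mulSingle_eq_of_ne hj, map_one])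
      (fun h => absurd (Finset.mem_univ i) h)]
    rw [Pi.mulSingle_eq_same]
  -- every element of U is algebraic over L
  have halg : ∀ x ∈ U, IsAlgebraic L x := by
    intro x hx
    rw [hUdef, Set.mem_iUnion] at hx
    obtain ⟨i, r, rfl⟩ := hx
    have h1 : IsIntegral S r := Algebra.IsIntegral.isIntegral r
    have h2 : IsIntegral S (f i r) := h1.map (f i)
    exact (h2.tower_top (A := L)).isAlgebraic
  -- the L-span of the image of each f i
  set W : ∀ _ : Fin n, Submodule L Ω := fun i => Submodule.span L (Set.range ⇑(f i)) with hWdef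
  haveI hWfd : ∀ i, FiniteDimensional L (W i) := by
    intro i
    obtain ⟨G, hG⟩ := Module.finite_def.mp (inferInstance : Module.Finite S (R i))
    haveI : FiniteDimensional L (Submodule.span L (⇑(f i) '' ↑G)) :=
      FiniteDimensional.span_of_finite L ((G.finite_toSet).image _)
    refine Submodule.finiteDimensional_of_le (S₂ := Submodule.span L (⇑(f i) '' ↑G)) ?_
    rw [hWdef, Submodule.span_le]
    rintro x ⟨r, rfl⟩
    have hr : r ∈ Submodule.span S (G : Set (R i)) := by rw [hG]; trivial
    have hmap : f i r ∈ Submodule.map ((f i).toLinearMap) (Submodule.span S (G : Set (R i))) :=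
      Submodule.mem_map_of_mem hr
    rw [Submodule.map_span] at hmap
    exact Submodule.span_subset_span S L _ hmap
  -- choose a basis of each W i inside the image of f i
  have hEx : ∀ i, ∃ b : Set Ω, b ⊆ Set.range ⇑(f i) ∧
      Submodule.span L b = Submodule.span L (Set.range ⇑(f i)) ∧
      LinearIndependent L ((↑) : b → Ω) := fun i => exists_linearIndependent L _
  choose b hbsub hbspan hbind using hEx
  have hbW : ∀ i, Submodule.span L (Set.range ((↑) : b i → Ω)) = W i := by
    intro i; rw [Subtype.range_coe]; exact hbspan i
  let bas : ∀ i, Module.Basis (b i) L (W i) := fun i =>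
    (Module.Basis.span (hbind i)).map (LinearEquiv.ofEq _ _ (hbW i))
  letI instFB : ∀ i, Fintype (b i) := fun i => FiniteDimensional.fintypeBasisIndex (bas i)
  have hcard : ∀ i, Fintype.card (b i) = Module.finrank L (W i) := fun i =>
    (Module.finrank_eq_card_basis (bas i)).symm
  -- preimages of the basis elements
  have hpre : ∀ (i) (β : b i), ∃ r : R i, f i r = (β : Ω) := fun i β => hbsub i β.2
  choose g hg using hpre
  -- clearing denominators: every element of R i has a multiple in the S-span of g i
  have hrep : ∀ (i) (r : R i), ∃ s : nonZeroDivisors S,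
      (s : S) • r ∈ Submodule.span S (Set.range (g i)) := by
    intro i r
    have h1 : f i r ∈ Submodule.span L (Set.range fun β : b i => f i (g i β)) := by
      have hbeq : (Set.range fun β : b i => f i (g i β)) = b i := by
        have : (fun β : b i => f i (g i β)) = fun β : b i => (β : Ω) := by
          funext β; exact hg i β
        rw [this, Subtype.range_coe]
      rw [hbeq, hbspan i]
      exact Submodule.subset_span ⟨r, rfl⟩
    obtain ⟨c, hc⟩ := (Submodule.mem_span_range_iff_exists_fun L).mp h1
    obtain ⟨s, hs⟩ := IsLocalization.exist_integer_multiples (nonZeroDivisors S) Finset.univ c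
    have hs' : ∀ β : b i, ∃ a : S, algebraMap S L a = (s : S) • c β := fun β =>
      hs β (Finset.mem_univ β)
    choose a ha using hs'
    refine ⟨s, ?_⟩
    have hsm : ∀ β : b i, (s : S) • (c β • f i (g i β)) = a β • f i (g i β) := by
      intro β
      calc (s : S) • (c β • f i (g i β))
          = algebraMap S L (s : S) • (c β • f i (g i β)) :=
            (algebraMap_smul L _ _).symm
        _ = ((algebraMap S L (s : S)) * c β) • f i (g i β) := (mul_smul _ _ _).symm
        _ = ((s : S) • c β) • f i (g i β) := by rw [Algebra.smul_def (s : S) (c β)]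
        _ = algebraMap S L (a β) • f i (g i β) := by rw [ha β]
        _ = a β • f i (g i β) := algebraMap_smul L _ _
    have key : f i ((s : S) • r) = f i (∑ β : b i, a β • g i β) := by
      rw [map_smul, map_sum, ← hc, Finset.smul_sum]
      exact Finset.sum_congr rfl fun β _ => by rw [hsm β, map_smul]
    rw [hfinj i key]
    exact Submodule.sum_mem _ fun β _ =>
      Submodule.smul_mem _ _ (Submodule.subset_span ⟨β, rfl⟩)
  -- the base-changed tensor product
  let m : (⨂[S] i, R i) →ₗ[S] (L ⊗[S] (⨂[S] i, R i)) := TensorProduct.mk S L (⨂[S] i, R i) 1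
  have hm : ∀ t, m t = (1 : L) ⊗ₜ[S] t := fun t => rfl
  haveI hLoc : IsLocalizedModule (nonZeroDivisors S) m :=
    (isLocalizedModule_iff_isBaseChange (nonZeroDivisors S) L m).mpr
      (TensorProduct.isBaseChange S (⨂[S] i, R i) L)
  have hminj : Function.Injective m := by
    intro x y hxy
    have h0 : m (x - y) = 0 := by rw [map_sub, hxy, sub_self]
    obtain ⟨s, hs⟩ := (IsLocalizedModule.eq_zero_iff (nonZeroDivisors S) m).mp h0
    rcases htf (s : S) (x - y) (by simpa [Submonoid.smul_def] using hs) with h | h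
    · exact absurd h (nonZeroDivisors.ne_zero s.2)
    · exact sub_eq_zero.mp h
  -- the algebra map ψ on the base change
  let ψ : (L ⊗[S] (⨂[S] i, R i)) →ₐ[L] Ω :=
    Algebra.TensorProduct.lift (Algebra.ofId L Ω) φ fun _ _ => Commute.all _ _
  have hψ : ∀ (l : L) (t : ⨂[S] i, R i), ψ (l ⊗ₜ[S] t) = algebraMap L Ω l * φ t := fun l t => by
    simp [ψ, Algebra.TensorProduct.lift_tmul, Algebra.ofId_apply]
  have hψm : ∀ t, ψ (m t) = φ t := fun t => by rw [hm, hψ, map_one, one_mul]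
  -- the spanning family of the base change
  let v : (∀ i, b i) → (L ⊗[S] (⨂[S] i, R i)) := fun p =>
    (1 : L) ⊗ₜ[S] (PiTensorProduct.tprod S fun i => g i (p i))
  have hsmulS : ∀ (r : S) (z : L ⊗[S] (⨂[S] i, R i)),
      z ∈ Submodule.span L (Set.range v) → r • z ∈ Submodule.span L (Set.range v) := by
    intro r z hz
    rw [← algebraMap_smul L r z]
    exact Submodule.smul_mem _ _ hz
  have hcore : ∀ x : ∀ i, R i,
      ((1 : L) ⊗ₜ[S] PiTensorProduct.tprod S x) ∈ Submodule.span L (Set.range v) := by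
    intro x
    choose s hs using fun i => hrep i (x i)
    have hfun := fun i => (Submodule.mem_span_range_iff_exists_fun S).mp (hs i)
    choose a ha using hfun
    have hy : (PiTensorProduct.tprod S fun i => (s i : S) • x i)
        = ∑ p : ∀ i, b i, (∏ i, a i (p i)) • PiTensorProduct.tprod S fun i => g i (p i) := by
      calc PiTensorProduct.tprod S (fun i => (s i : S) • x i)
          = PiTensorProduct.tprod S (fun i => ∑ β : b i, a i β • g i β) := by
            congr 1; funext i; exact (ha i).symm
        _ = ∑ p : ∀ i, b i, PiTensorProduct.tprod S (fun i => a i (p i) • g i (p i)) :=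
            MultilinearMap.map_sum _ _
        _ = _ := Finset.sum_congr rfl fun p _ => MultilinearMap.map_smul_univ _ _ _
    have hsx : (PiTensorProduct.tprod S fun i => (s i : S) • x i)
        = (∏ i, (s i : S)) • PiTensorProduct.tprod S x :=
      MultilinearMap.map_smul_univ _ _ _
    have hymem : ((1 : L) ⊗ₜ[S] (PiTensorProduct.tprod S fun i => (s i : S) • x i))
        ∈ Submodule.span L (Set.range v) := by
      rw [hy, TensorProduct.tmul_sum]
      refine Submodule.sum_mem _ fun p _ => ?_
      rw [TensorProduct.tmul_smul]
      exact hsmulS _ _ (Submodule.subset_span ⟨p, rfl⟩)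
    set e : L := algebraMap S L (∏ i, (s i : S)) with he
    have he0 : e ≠ 0 := by
      have hne : (∏ i, (s i : S)) ≠ 0 :=
        Finset.prod_ne_zero_iff.mpr fun i _ => nonZeroDivisors.ne_zero (s i).2
      intro h
      exact hne (IsFractionRing.injective S L (by rw [← he, h, map_zero]))
    have heq : e • ((1 : L) ⊗ₜ[S] PiTensorProduct.tprod S x)
        = (1 : L) ⊗ₜ[S] (PiTensorProduct.tprod S fun i => (s i : S) • x i) := by
      rw [hsx, TensorProduct.tmul_smul, he,
        algebraMap_smul L (∏ i, (s i : S)) ((1 : L) ⊗ₜ[S] PiTensorProduct.tprod S x)]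
    have hx : ((1 : L) ⊗ₜ[S] PiTensorProduct.tprod S x)
        = e⁻¹ • ((1 : L) ⊗ₜ[S] (PiTensorProduct.tprod S fun i => (s i : S) • x i)) := by
      rw [← heq, smul_smul, inv_mul_cancel₀ he0, one_smul]
    rw [hx]
    exact Submodule.smul_mem _ _ hymem
  have hvW : Submodule.span L (Set.range v) = ⊤ := by
    rw [eq_top_iff]
    rintro z -
    induction z using TensorProduct.induction_on with
    | zero => exact Submodule.zero_mem _
    | tmul l t =>
      have h1t : ((1 : L) ⊗ₜ[S] t) ∈ Submodule.span L (Set.range v) := by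
        induction t using PiTensorProduct.induction_on with
        | smul_tprod r x =>
          rw [TensorProduct.tmul_smul]
          exact hsmulS r _ (hcore x)
        | add t₁ t₂ h₁ h₂ =>
          rw [TensorProduct.tmul_add]; exact Submodule.add_mem _ h₁ h₂
      have hlt : l ⊗ₜ[S] t = l • ((1 : L) ⊗ₜ[S] t) := by
        rw [TensorProduct.smul_tmul', smul_eq_mul, mul_one]
      rw [hlt]
      exact Submodule.smul_mem _ _ h1t
    | add z₁ z₂ h₁ h₂ => exact Submodule.add_mem _ h₁ h₂
  haveI hfdTL : FiniteDimensional L (L ⊗[S] (⨂[S] i, R i)) := by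
    haveI := FiniteDimensional.span_of_finite L (Set.finite_range v)
    exact Module.Finite.equiv (LinearEquiv.ofTop _ hvW)
  -- identification of finranks of the fields
  have hfrW : ∀ i, Module.finrank L (W i)
      = Module.finrank L (IntermediateField.adjoin L (Set.range ⇑(f i))) := by
    intro i
    have h1 : (IntermediateField.adjoin L (Set.range ⇑(f i))).toSubalgebra
        = Algebra.adjoin L (Set.range ⇑(f i)) :=
      IntermediateField.adjoin_toSubalgebra_of_isAlgebraic fun x hx =>
        halg x (by rw [hUdef, Set.mem_iUnion]; exact ⟨i, hx⟩)
    have hcl : (↑(Submonoid.closure (Set.range ⇑(f i))) : Set Ω) = Set.range ⇑(f i) := by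
      apply Set.Subset.antisymm
      · intro x hx
        refine Submonoid.closure_induction (fun y hy => hy) ⟨1, map_one (f i)⟩ ?_ hx
        rintro y z _ _ ⟨ry, rfl⟩ ⟨rz, rfl⟩
        exact ⟨ry * rz, map_mul (f i) ry rz⟩
      · exact Submonoid.subset_closure
    have h2 : Subalgebra.toSubmodule (Algebra.adjoin L (Set.range ⇑(f i))) = W i := by
      rw [Algebra.adjoin_eq_span, hWdef]
      exact congrArg _ hcl
    rw [← h2, Subalgebra.finrank_toSubmodule, ← h1,
      IntermediateField.finrank_eq_finrank_subalgebra]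
  -- the image of φ is the adjoin of U over S
  have hφmem : ∀ t, φ t ∈ Algebra.adjoin S U := by
    intro t
    induction t using PiTensorProduct.induction_on with
    | smul_tprod r x =>
      rw [map_smul, φ_tprod]
      exact Subalgebra.smul_mem _ (Subalgebra.prod_mem _ fun i _ =>
        Algebra.subset_adjoin (by rw [hUdef, Set.mem_iUnion]; exact ⟨i, ⟨x i, rfl⟩⟩)) r
    | add t₁ t₂ h₁ h₂ =>
      rw [map_add]; exact Subalgebra.add_mem _ h₁ h₂
  have hφrange : φ.range = Algebra.adjoin S U := by
    apply le_antisymm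
    · rintro w ⟨t, rfl⟩
      exact hφmem t
    · apply Algebra.adjoin_le
      intro w hw
      rw [hUdef, Set.mem_iUnion] at hw
      obtain ⟨i, r, rfl⟩ := hw
      exact ⟨PiTensorProduct.tprod S (Pi.mulSingle i r), hφsingle i r⟩
  -- the image of ψ is the adjoin of U over L
  have hSL : ∀ w, w ∈ Algebra.adjoin S U → w ∈ Algebra.adjoin L U := by
    intro w hw
    have hle : Algebra.adjoin S U ≤ Subalgebra.restrictScalars S (Algebra.adjoin L U) :=
      Algebra.adjoin_le fun x hx => Algebra.subset_adjoin hx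
    exact (Subalgebra.mem_restrictScalars (R := S)).mp (hle hw)
  have hψrange : ψ.range = Algebra.adjoin L U := by
    apply le_antisymm
    · rintro w ⟨z, rfl⟩
      show ψ z ∈ Algebra.adjoin L U
      induction z using TensorProduct.induction_on with
      | zero => rw [map_zero]; exact Subalgebra.zero_mem _
      | tmul l t =>
        rw [hψ]
        exact Subalgebra.mul_mem _ (Subalgebra.algebraMap_mem _ l) (hSL _ (hφmem t))
      | add z₁ z₂ h₁ h₂ =>
        rw [map_add]; exact Subalgebra.add_mem _ h₁ h₂
    · apply Algebra.adjoin_le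
      intro w hw
      rw [hUdef, Set.mem_iUnion] at hw
      obtain ⟨i, r, rfl⟩ := hw
      refine ⟨m (PiTensorProduct.tprod S (Pi.mulSingle i r)), ?_⟩
      show ψ (m (PiTensorProduct.tprod S (Pi.mulSingle i r))) = f i r
      rw [hψm, hφsingle i r]
  -- finrank comparison
  have hKsub : (IntermediateField.adjoin L U).toSubalgebra = Algebra.adjoin L U :=
    IntermediateField.adjoin_toSubalgebra_of_isAlgebraic halg
  have hrange_lin : LinearMap.range ψ.toLinearMap
      = Subalgebra.toSubmodule (Algebra.adjoin L U) := by
    rw [← hψrange]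
    ext w
    simp [LinearMap.mem_range, AlgHom.mem_range]
  have hfr_range : Module.finrank L (LinearMap.range ψ.toLinearMap)
      = Module.finrank L (IntermediateField.adjoin L U) := by
    rw [hrange_lin, Subalgebra.finrank_toSubmodule, ← hKsub,
      IntermediateField.finrank_eq_finrank_subalgebra]
  have hle2 : Module.finrank L (L ⊗[S] (⨂[S] i, R i))
      ≤ Module.finrank L (LinearMap.range ψ.toLinearMap) := by
    calc Module.finrank L (L ⊗[S] (⨂[S] i, R i)) ≤ Fintype.card (∀ i, b i) :=
        finrank_le_of_span_eq_top hvW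
      _ = ∏ i, Fintype.card (b i) := Fintype.card_pi
      _ = ∏ i, Module.finrank L (W i) := Finset.prod_congr rfl fun i _ => hcard i
      _ = ∏ i, Module.finrank L (IntermediateField.adjoin L (Set.range ⇑(f i))) :=
        Finset.prod_congr rfl fun i _ => hfrW i
      _ = Module.finrank L (IntermediateField.adjoin L U) := hdeg.symm
      _ = Module.finrank L (LinearMap.range ψ.toLinearMap) := hfr_range.symm
  have hψinj : Function.Injective ⇑ψ := by
    have hrn := LinearMap.finrank_range_add_finrank_ker ψ.toLinearMap
    have hker0 : Module.finrank L (LinearMap.ker ψ.toLinearMap) = 0 := by omega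
    have hker : LinearMap.ker ψ.toLinearMap = ⊥ := Submodule.finrank_eq_zero.mp hker0
    have := LinearMap.ker_eq_bot.mp hker
    intro x y hxy
    exact this hxy
  have hφinj : Function.Injective ⇑φ := by
    intro x y hxy
    apply hminj
    apply hψinj
    rw [hψm, hψm, hxy]
  exact ⟨(AlgEquiv.ofInjective φ hφinj).trans (Subalgebra.equivOfEq _ _ hφrange)⟩
end

section
/- In the following setup, Hom_{𝔇[ω]}(J_{n,h}, 𝔇[ω]), identified with the fractional ideal (J_{n,h})^{−1} inside Frac(𝔇[ω]), is generated as a 𝔇[ω]-module by 1, q_1, …, q_{p−1}, where q_i : J_{n,h} → 𝔇[ω] is multiplication by α^{−ni}(ω − h)^i. -/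
open IsLocalRing

universe u v w x

/-- A Noetherian local ring is Gorenstein if it is Cohen-Macaulay and some maximal regular
sequence of length equal to the dimension generates an irreducible ideal. -/
def IsGorensteinLocalRing (R : Type*) [CommRing R] [IsLocalRing R] : Prop :=
  IsNoetherianRing R ∧ (ringDepth R (maximalIdeal R) : WithBot ℕ∞) = ringKrullDim R ∧
  ∃ rs : List R, (∀ r ∈ rs, r ∈ maximalIdeal R) ∧ RingTheory.Sequence.IsRegular R rs ∧
    ((rs.length : ℕ∞) : WithBot ℕ∞) = ringKrullDim R ∧
    ∀ I J : Ideal R, Ideal.ofList rs = I ⊓ J → Ideal.ofList rs = I ∨ Ideal.ofList rs = J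

/-- A Noetherian ring is Gorenstein if its localization at every maximal ideal is a
Gorenstein local ring. -/
def IsGorensteinRing (R : Type*) [CommRing R] : Prop :=
  IsNoetherianRing R ∧ ∀ (P : Ideal R) (hP : P.IsMaximal),
    letI := hP.isPrime
    IsGorensteinLocalRing (Localization.AtPrime P)

/-- `𝔇[ω] = 𝔇[X]/(X^p - f)`. -/
abbrev Dw (D : Type u) [CommRing D] (p : ℕ) (f : D) : Type u :=
  AdjoinRoot (Polynomial.X ^ p - Polynomial.C f)

/-- The element `ω - h` of `𝔇[ω]`. -/
noncomputable def omegaSubH (D : Type u) [CommRing D] (p : ℕ) (f h : D) : Dw D p f :=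
  AdjoinRoot.root _ - algebraMap D (Dw D p f) h

/-- The ideal `J_{n,h} = (ω - h, α^n)^{p-1}` of `𝔇[ω]`. -/
noncomputable def Jnh (D : Type u) [CommRing D] (p : ℕ) (f : D) (n : ℕ) (h a : D) :
    Ideal (Dw D p f) :=
  (Ideal.span {omegaSubH D p f h, (algebraMap D (Dw D p f) a) ^ n}) ^ (p - 1)

/-- The prime `P = (α, ω - h)` of `𝔇[ω]`. -/
noncomputable def Ph (D : Type u) [CommRing D] (p : ℕ) (f : D) (h a : D) : Ideal (Dw D p f) :=
  Ideal.span {algebraMap D (Dw D p f) a, omegaSubH D p f h}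

section AuxKummer
open Polynomial

-- aux 1: (span {x,y})^m ≤ I given products in I
theorem aux_span_pair_pow_le {R : Type*} [CommRing R] (x y : R) (m : ℕ) (I : Ideal R)
    (h : ∀ j, j ≤ m → x ^ j * y ^ (m - j) ∈ I) : Ideal.span {x, y} ^ m ≤ I := by
  induction m generalizing I with
  | zero =>
      have h1 : (1 : R) ∈ I := by simpa using h 0 le_rfl
      rw [pow_zero, Ideal.one_eq_top, (Ideal.eq_top_iff_one I).mpr h1]
  | succ m ih =>
      have hT := ih (Submodule.comap (LinearMap.mulLeft R x) I ⊓
          Submodule.comap (LinearMap.mulLeft R y) I) ?_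
      · rw [pow_succ]
        refine Ideal.mul_le.mpr fun r hr s hs => ?_
        obtain ⟨c, d, rfl⟩ := Ideal.mem_span_pair.mp hs
        have h2 := hT hr
        rw [Submodule.mem_inf, Submodule.mem_comap, Submodule.mem_comap] at h2
        have : r * (c * x + d * y) = c * (LinearMap.mulLeft R x r) + d * (LinearMap.mulLeft R y r) := by
          simp [LinearMap.mulLeft_apply]; ring
        rw [this]
        exact I.add_mem (I.mul_mem_left _ h2.1) (I.mul_mem_left _ h2.2)
      · intro j hj
        rw [Submodule.mem_inf, Submodule.mem_comap, Submodule.mem_comap]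
        constructor
        · have := h (j+1) (by omega)
          simpa [LinearMap.mulLeft_apply, pow_succ, Nat.succ_sub_succ] using by
            have heq : x * (x ^ j * y ^ (m - j)) = x ^ (j+1) * y ^ (m + 1 - (j+1)) := by
              rw [Nat.succ_sub_succ]; ring
            rw [heq]; exact this
        · have := h j (by omega)
          have heq : y * (x ^ j * y ^ (m - j)) = x ^ j * y ^ (m + 1 - j) := by
            rw [show m + 1 - j = (m - j) + 1 by omega]; ring
          simpa [LinearMap.mulLeft_apply, heq] using this


-- aux 2: (x-y)^p = x^p - y^p + p*s
theorem aux_sub_pow_prime {R : Type*} [CommRing R] {p : ℕ} (hp : p.Prime) (x y : R) :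
    ∃ s : R, (x - y) ^ p = x ^ p - y ^ p + (p : R) * s := by
  obtain ⟨s, hs⟩ := exists_add_pow_prime_eq hp x (-y)
  rcases hp.eq_two_or_odd' with h2 | hodd
  · subst h2; exact ⟨y * y - x * y, by ring⟩
  · refine ⟨-(x * y * s), ?_⟩
    rw [← sub_eq_add_neg] at hs
    rw [hs, hodd.neg_pow]; ring


variable {D : Type u} [CommRing D] [IsDomain D] {p : ℕ}

theorem root_pow_eq (D : Type u) [CommRing D] (p : ℕ) (f : D) :
    (AdjoinRoot.root (X ^ p - C f : D[X])) ^ p = algebraMap D (Dw D p f) f := by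
  have h0 := AdjoinRoot.mk_self (f := (X ^ p - C f : D[X]))
  rw [map_sub, map_pow, AdjoinRoot.mk_X, sub_eq_zero] at h0
  rw [h0, AdjoinRoot.algebraMap_eq, AdjoinRoot.of]
  rfl

theorem gMonic (hp2 : 2 ≤ p) (f h : D) : ((X + C h) ^ p - C f).Monic := by
  have h1 : ((X + C h) ^ p).Monic := (monic_X_add_C h).pow p
  have hnd : ((X + C h) ^ p).natDegree = p := by
    rw [(monic_X_add_C h).natDegree_pow, natDegree_X_add_C, mul_one]
  refine h1.sub_of_left ?_
  rw [degree_eq_natDegree h1.ne_zero, hnd]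
  exact lt_of_le_of_lt degree_C_le (by exact_mod_cast (show 0 < p by omega))

theorem gNatDegree (hp2 : 2 ≤ p) (f h : D) : ((X + C h) ^ p - C f).natDegree = p := by
  have h1 : ((X + C h) ^ p).Monic := (monic_X_add_C h).pow p
  have hnd : ((X + C h) ^ p).natDegree = p := by
    rw [(monic_X_add_C h).natDegree_pow, natDegree_X_add_C, mul_one]
  have hdlt : (-C f).degree < ((X + C h) ^ p).degree := by
    rw [degree_eq_natDegree h1.ne_zero, hnd, degree_neg]
    exact lt_of_le_of_lt degree_C_le (by exact_mod_cast (show 0 < p by omega))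
  apply natDegree_eq_of_degree_eq_some
  rw [sub_eq_add_neg, degree_add_eq_left_of_degree_lt hdlt,
    degree_eq_natDegree h1.ne_zero, hnd]

/-- The algebra equivalence `D[X]/(g) ≃ Dw` sending `root g ↦ τ`,
where `g = (X + C h)^p - C f`. -/
theorem aeval_tau (f h : D) :
    aeval (omegaSubH D p f h) ((X + C h) ^ p - C f) = 0 := by
  rw [map_sub, map_pow, map_add, aeval_X, aeval_C, aeval_C, omegaSubH, sub_add_cancel,
    root_pow_eq, sub_self]

theorem aeval_rootg (f h : D) :
    aeval (AdjoinRoot.root ((X + C h) ^ p - C f) + algebraMap D _ h)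
      ((X : D[X]) ^ p - C f) = 0 := by
  rw [map_sub, map_pow, aeval_X, aeval_C]
  have := AdjoinRoot.mk_self (f := ((X + C h) ^ p - C f))
  rw [map_sub, map_pow, map_add, AdjoinRoot.mk_X, AdjoinRoot.mk_C] at this
  rw [← AdjoinRoot.algebraMap_eq] at this
  exact this

noncomputable def tauEquiv (hp : p.Prime) (f h : D) :
    AdjoinRoot ((X + C h) ^ p - C f) ≃ₐ[D] Dw D p f :=
  AlgEquiv.ofAlgHom
    (AdjoinRoot.liftAlgHom _ (Algebra.ofId D _) (omegaSubH D p f h)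
      (by rw [Algebra.toRingHom_ofId, ← aeval_def]; exact aeval_tau f h))
    (AdjoinRoot.liftAlgHom _ (Algebra.ofId D _) (AdjoinRoot.root _ + algebraMap D _ h) 
      (by rw [Algebra.toRingHom_ofId, ← aeval_def]; exact aeval_rootg f h))
    (by
      apply AdjoinRoot.algHom_ext
      rw [AlgHom.coe_comp, Function.comp_apply, AdjoinRoot.liftAlgHom_root, map_add,
        AdjoinRoot.liftAlgHom_root, AlgHom.commutes, omegaSubH, AlgHom.coe_id, id_eq,
        sub_add_cancel])
    (by
      apply AdjoinRoot.algHom_ext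
      rw [AlgHom.coe_comp, Function.comp_apply, AdjoinRoot.liftAlgHom_root, omegaSubH,
        map_sub, AdjoinRoot.liftAlgHom_root, AlgHom.commutes, AlgHom.coe_id, id_eq,
        add_sub_cancel_right])

theorem tauEquiv_root (hp : p.Prime) (f h : D) :
    tauEquiv hp f h (AdjoinRoot.root _) = omegaSubH D p f h := by
  have : tauEquiv hp f h (AdjoinRoot.root _) =
      (AdjoinRoot.liftAlgHom _ (Algebra.ofId D _) (omegaSubH D p f h)
      (by rw [Algebra.toRingHom_ofId, ← aeval_def]; exact aeval_tau f h)) (AdjoinRoot.root _) := by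
    rw [tauEquiv]
    rfl
  rw [this, AdjoinRoot.liftAlgHom_root]

/-- τ-power basis of Dw. -/
noncomputable def tauBasis (hp : p.Prime) (f h : D) : Module.Basis (Fin p) D (Dw D p f) :=
  (((AdjoinRoot.powerBasis' (gMonic hp.two_le f h)).map (tauEquiv hp f h)).basis).reindex
    (finCongr (by simp [gNatDegree hp.two_le f h]))

theorem tauBasis_apply (hp : p.Prime) (f h : D) (i : Fin p) :
    tauBasis hp f h i = (omegaSubH D p f h) ^ (i : ℕ) := by
  rw [tauBasis, Module.Basis.reindex_apply, PowerBasis.basis_eq_pow]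
  have hgen : ((AdjoinRoot.powerBasis' (gMonic hp.two_le f h)).map (tauEquiv hp f h)).gen
      = omegaSubH D p f h := by
    show (tauEquiv hp f h) (AdjoinRoot.root _) = _
    exact tauEquiv_root hp f h
  rw [hgen]
  congr 1


set_option maxHeartbeats 1000000 in
theorem main
    (D : Type u) [CommRing D] [IsDomain D]
    (p : ℕ) (hp : p.Prime)
    (a : D)
    (k : ℕ) (hk1 : (p : D) ∈ Ideal.span {a ^ k}) (hk2 : (p : D) ∉ Ideal.span {a ^ (k + 1)})
    (f : D)
    (n : ℕ) (hn : 0 < n)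
    (htk : n * (p - 1) ≤ k)
    (r : ℕ) (htr : n * (p - 1) ≤ r)
    (h : D) (hh : h ^ p - f ∈ Ideal.span {a ^ r}) :
    ∃ φ : Fin p → (↥(Jnh D p f n h a) →ₗ[Dw D p f] Dw D p f),
      (∀ (i : Fin p) (x : ↥(Jnh D p f n h a)),
        (algebraMap D (Dw D p f) a) ^ (n * (i : ℕ)) * φ i x =
          (omegaSubH D p f h) ^ (i : ℕ) * (x : Dw D p f)) ∧
      (⊤ : Submodule (Dw D p f) (↥(Jnh D p f n h a) →ₗ[Dw D p f] Dw D p f)) =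
        Submodule.span (Dw D p f) (Set.range φ) := by
  have hp2 : 2 ≤ p := hp.two_le
  set R := Dw D p f with hR
  set τ := omegaSubH D p f h with hτ
  set A : R := algebraMap D R a with hA
  set t := n * (p - 1) with ht
  have ht1 : 0 < t := Nat.mul_pos hn (by omega)
  have ha0 : a ≠ 0 := by
    intro h0
    apply hk2
    subst h0
    have : (0:D) ^ k = 0 := zero_pow (by omega)
    rw [this, Ideal.span_singleton_eq_bot.mpr rfl, Ideal.mem_bot] at hk1
    rw [hk1]
    exact Submodule.zero_mem _
  -- basis
  set b : Module.Basis (Fin p) D R := tauBasis hp f h with hbdef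
  have hb : ∀ i : Fin p, b i = τ ^ (i : ℕ) := tauBasis_apply hp f h
  -- nonzerodivisor
  have hA0 : ∀ w : R, A * w = 0 → w = 0 := by
    intro w hw
    have h1 : a • w = 0 := by rw [Algebra.smul_def]; exact hw
    have h2 : ∀ i, a * b.repr w i = 0 := by
      intro i
      have := congrArg (fun z => b.repr z i) h1
      simpa using this
    have h3 : b.repr w = 0 := by
      ext i
      rcases mul_eq_zero.mp (h2 i) with hc | hc
      · exact absurd hc ha0
      · simpa using hc
    have := congrArg b.repr.symm h3
    simpa using this
  have hcancel : ∀ (s : ℕ) (y z : R), A ^ s * y = A ^ s * z → y = z := by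
    intro s
    induction s with
    | zero => intro y z hyz; simpa using hyz
    | succ s ih =>
        intro y z hyz
        refine ih y z (sub_eq_zero.mp (hA0 _ ?_))
        rw [mul_sub]
        rw [show A * (A ^ s * y) = A ^ (s+1) * y by ring,
          show A * (A ^ s * z) = A ^ (s+1) * z by ring, hyz, sub_self]
  -- divisibilities
  have hmapdvd : ∀ (s : ℕ) (d : D), a ^ s ∣ d → A ^ s ∣ algebraMap D R d := by
    intro s d hd
    have := map_dvd (algebraMap D R) hd
    rwa [map_pow] at this
  have hdvdp : A ^ t ∣ ((p : ℕ) : R) := by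
    have h1 : a ^ k ∣ (p : D) := Ideal.mem_span_singleton.mp hk1
    have h2 : a ^ t ∣ (p : D) := (pow_dvd_pow a htk).trans h1
    have := hmapdvd t _ h2
    rwa [map_natCast] at this
  have hdvdfh : A ^ t ∣ algebraMap D R (f - h ^ p) := by
    refine hmapdvd t _ ?_
    have h1 : a ^ r ∣ h ^ p - f := Ideal.mem_span_singleton.mp hh
    have h2 : a ^ t ∣ h ^ p - f := (pow_dvd_pow a htr).trans h1
    rw [show f - h ^ p = -(h ^ p - f) by ring]
    exact dvd_neg.mpr h2
  have hτp : A ^ t ∣ τ ^ p := by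
    obtain ⟨s, hs⟩ := aux_sub_pow_prime hp (AdjoinRoot.root (X ^ p - C f : D[X]))
      (algebraMap D R h)
    have hfh' : (algebraMap D R) f - (algebraMap D R) h ^ p = algebraMap D R (f - h ^ p) := by
      rw [map_sub, map_pow]
    rw [hτ, omegaSubH, hs, root_pow_eq, hfh']
    exact dvd_add hdvdfh (hdvdp.mul_right s)
  -- key divisibility for J
  have hkey : ∀ i : ℕ, i ≤ p - 1 → ∀ x ∈ Jnh D p f n h a,
      τ ^ i * x ∈ Ideal.span {A ^ (n * i)} := by
    intro i hi
    have hle : Jnh D p f n h a ≤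
        Submodule.comap (LinearMap.mulLeft R (τ ^ i)) (Ideal.span {A ^ (n * i)}) := by
      rw [Jnh]
      apply aux_span_pair_pow_le
      intro j hj
      simp only [Submodule.mem_comap, LinearMap.mulLeft_apply]
      rw [Ideal.mem_span_singleton]
      by_cases hij : i + j ≤ p - 1
      · have h1 : A ^ (n * i) ∣ (A ^ n) ^ (p - 1 - j) := by
          rw [← pow_mul]
          exact pow_dvd_pow A (Nat.mul_le_mul_left n (by omega))
        have heq : τ ^ i * (τ ^ j * (A ^ n) ^ (p - 1 - j)) =
            (τ ^ i * τ ^ j) * (A ^ n) ^ (p - 1 - j) := by ring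
        rw [heq]
        exact h1.mul_left _
      · have h1 : A ^ (n * i) ∣ A ^ t := pow_dvd_pow A (Nat.mul_le_mul_left n hi)
        have h2 : A ^ (n * i) ∣ τ ^ (i + j) := by
          have heq : τ ^ (i + j) = τ ^ p * τ ^ (i + j - p) := by
            rw [← pow_add]; congr 1; omega
          rw [heq]
          exact (h1.trans hτp).mul_right _
        have heq : τ ^ i * (τ ^ j * (A ^ n) ^ (p - 1 - j)) =
            τ ^ (i + j) * (A ^ n) ^ (p - 1 - j) := by
          rw [← mul_assoc, ← pow_add]
        rw [heq]
        exact h2.mul_right _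
    intro x hx
    exact hle hx
  -- existence of quotients
  have hφex : ∀ (i : Fin p) (x : ↥(Jnh D p f n h a)),
      ∃ y : R, A ^ (n * (i : ℕ)) * y = τ ^ (i : ℕ) * (x : R) := by
    intro i x
    have := hkey i (by omega) x.1 x.2
    rw [Ideal.mem_span_singleton] at this
    obtain ⟨y, hy⟩ := this
    exact ⟨y, hy.symm⟩
  set φ : Fin p → (↥(Jnh D p f n h a) →ₗ[R] R) := fun i =>
    { toFun := fun x => (hφex i x).choose
      map_add' := by
        intro x y
        apply hcancel (n * (i : ℕ))
        rw [(hφex i (x + y)).choose_spec, mul_add, (hφex i x).choose_spec,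
          (hφex i y).choose_spec, Submodule.coe_add, mul_add]
      map_smul' := by
        intro c x
        apply hcancel (n * (i : ℕ))
        rw [RingHom.id_apply, (hφex i (c • x)).choose_spec]
        rw [show A ^ (n * (i:ℕ)) * (c • (hφex i x).choose)
            = c * (A ^ (n * (i:ℕ)) * (hφex i x).choose) by
          rw [smul_eq_mul]; ring]
        rw [(hφex i x).choose_spec, Submodule.coe_smul, smul_eq_mul]
        ring } with hφdef
  have hφspec : ∀ (i : Fin p) (x : ↥(Jnh D p f n h a)),
      A ^ (n * (i : ℕ)) * φ i x = τ ^ (i : ℕ) * (x : R) := fun i x =>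
    (hφex i x).choose_spec
  refine ⟨φ, hφspec, ?_⟩
  -- the span part
  refine (top_le_iff.mp fun ψ _ => ?_).symm
  -- repr divisibility helper
  have hreprd : ∀ (s : ℕ) (x : R), A ^ s ∣ x → ∀ i : Fin p, a ^ s ∣ b.repr x i := by
    rintro s x ⟨y, rfl⟩ i
    have heq : A ^ s * y = (a ^ s) • y := by rw [Algebra.smul_def, map_pow]
    rw [heq, map_smul]
    exact ⟨b.repr y i, by simp⟩
  have hmemJ : ∀ j : ℕ, j ≤ p - 1 → τ ^ j * (A ^ n) ^ (p - 1 - j) ∈ Jnh D p f n h a := by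
    intro j hj
    have h1 : τ ∈ Ideal.span {τ, A ^ n} := Ideal.subset_span (Set.mem_insert _ _)
    have h2 : A ^ n ∈ Ideal.span {τ, A ^ n} :=
      Ideal.subset_span (Set.mem_insert_of_mem _ rfl)
    have := Ideal.mul_mem_mul (Ideal.pow_mem_pow h1 j) (Ideal.pow_mem_pow h2 (p - 1 - j))
    rw [← pow_add, show j + (p - 1 - j) = p - 1 by omega] at this
    exact this
  set gJ : ↥(Jnh D p f n h a) := ⟨A ^ t, by
    have := hmemJ 0 (by omega)
    simpa [ht, pow_mul] using this⟩ with hgJ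
  set c : R := ψ gJ with hc
  have hApsi : ∀ (x : R) (hx : x ∈ Jnh D p f n h a), A ^ t * ψ ⟨x, hx⟩ = c * x := by
    intro x hx
    have e1 : x • gJ = (A ^ t) • (⟨x, hx⟩ : ↥(Jnh D p f n h a)) :=
      Subtype.ext (by simp [mul_comm]; rfl)
    have := congrArg ψ e1
    rw [map_smul, map_smul, smul_eq_mul, smul_eq_mul] at this
    rw [← this, hc, mul_comm]
  have hcj : ∀ j : ℕ, j ≤ p - 1 → A ^ (n * j) ∣ c * τ ^ j := by
    intro j hj
    have hxj := hmemJ j hj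
    have h2 := hApsi _ hxj
    have hsplit : n * j + n * (p - 1 - j) = t := by
      rw [ht, ← Nat.mul_add]; congr 1; omega
    have h3 : A ^ (n * (p - 1 - j)) * (A ^ (n * j) * ψ ⟨_, hxj⟩)
        = A ^ (n * (p - 1 - j)) * (c * τ ^ j) := by
      rw [show A ^ (n * (p - 1 - j)) * (A ^ (n * j) * ψ ⟨_, hxj⟩)
          = A ^ (n * j + n * (p - 1 - j)) * ψ ⟨_, hxj⟩ by rw [pow_add]; ring,
        hsplit, h2, ← pow_mul]
      ring
    have := hcancel _ _ _ h3
    exact ⟨_, this.symm⟩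
  -- coordinates of c
  have hcoord : ∀ m : Fin p, a ^ (n * (p - 1 - (m : ℕ))) ∣ b.repr c m := by
    intro m
    set j := p - 1 - (m : ℕ) with hj
    have hjle : j ≤ p - 1 := by omega
    have hmlt : (m : ℕ) < p := m.isLt
    set i0 : Fin p := ⟨p - 1, by omega⟩ with hi0
    have hct : b.repr (c * τ ^ j) i0
        = ∑ m' : Fin p, b.repr c m' * b.repr (τ ^ ((m' : ℕ) + j)) i0 := by
      conv_lhs => rw [← b.sum_repr c, Finset.sum_mul]
      rw [map_sum, Finsupp.coe_finset_sum, Finset.sum_apply]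
      refine Finset.sum_congr rfl fun m' _ => ?_
      rw [smul_mul_assoc, hb m', ← pow_add, map_smul]
      simp
    have hterm : ∀ m' : Fin p, m' ≠ m →
        a ^ (n * j) ∣ b.repr c m' * b.repr (τ ^ ((m' : ℕ) + j)) i0 := by
      intro m' hne
      by_cases hlt : (m' : ℕ) + j < p
      · have hne2 : (⟨(m' : ℕ) + j, hlt⟩ : Fin p) ≠ i0 := by
          intro hEq
          apply hne
          have := congrArg Fin.val hEq
          simp only [hi0] at this
          exact Fin.ext (by omega)
        have hz : b.repr (τ ^ ((m' : ℕ) + j)) i0 = 0 := by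
          rw [show τ ^ ((m' : ℕ) + j) = b ⟨(m' : ℕ) + j, hlt⟩ by rw [hb]]
          rw [b.repr_self]
          exact Finsupp.single_eq_of_ne hne2.symm
        rw [hz, mul_zero]
        exact dvd_zero _
      · have hge : p ≤ (m' : ℕ) + j := not_lt.mp hlt
        have hdvd : A ^ t ∣ τ ^ ((m' : ℕ) + j) := by
          rw [show τ ^ ((m' : ℕ) + j) = τ ^ p * τ ^ ((m' : ℕ) + j - p) by
            rw [← pow_add]; congr 1; omega]
          exact hτp.mul_right _
        have h1 := hreprd t _ hdvd i0
        exact dvd_mul_of_dvd_right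
          ((pow_dvd_pow a (Nat.mul_le_mul_left n hjle)).trans h1) _
    have hmain : a ^ (n * j) ∣ b.repr (c * τ ^ j) i0 := hreprd (n * j) _ (hcj j hjle) i0
    have h1 : b.repr (τ ^ ((m : ℕ) + j)) i0 = 1 := by
      rw [show (m : ℕ) + j = ((i0 : Fin p) : ℕ) by simp [hi0, hj]; omega]
      rw [← hb i0, b.repr_self]
      exact Finsupp.single_eq_same
    have hsplit : b.repr (c * τ ^ j) i0 = b.repr c m
        + ∑ m' ∈ Finset.univ.erase m, b.repr c m' * b.repr (τ ^ ((m' : ℕ) + j)) i0 := by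
      rw [hct, ← Finset.add_sum_erase _ _ (Finset.mem_univ m), h1, mul_one]
    have h2 : a ^ (n * j) ∣ ∑ m' ∈ Finset.univ.erase m,
        b.repr c m' * b.repr (τ ^ ((m' : ℕ) + j)) i0 :=
      Finset.dvd_sum fun m' hm' => hterm m' (Finset.ne_of_mem_erase hm')
    have h3 : b.repr c m = b.repr (c * τ ^ j) i0
        - ∑ m' ∈ Finset.univ.erase m, b.repr c m' * b.repr (τ ^ ((m' : ℕ) + j)) i0 := by
      rw [hsplit]; ring
    rw [h3]
    exact dvd_sub hmain h2
  have hd : ∀ m : Fin p, ∃ dm : D, b.repr c m = a ^ (n * (p - 1 - (m : ℕ))) * dm :=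
    fun m => (hcoord m).elim fun dm hdm => ⟨dm, hdm⟩
  choose d hdspec using hd
  have hcsum : c = ∑ m : Fin p,
      algebraMap D R (d m) * (A ^ (n * (p - 1 - (m : ℕ))) * τ ^ (m : ℕ)) := by
    conv_lhs => rw [← b.sum_repr c]
    refine Finset.sum_congr rfl fun m _ => ?_
    rw [hb m, hdspec m, Algebra.smul_def, map_mul, map_pow]
    ring
  have hψeq : ψ = ∑ m : Fin p, algebraMap D R (d m) • φ m := by
    apply LinearMap.ext
    intro x
    apply hcancel t
    rw [LinearMap.sum_apply]
    rw [Finset.mul_sum]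
    have hterm : ∀ m : Fin p,
        A ^ t * ((algebraMap D R (d m) • φ m) x)
        = (algebraMap D R (d m) * (A ^ (n * (p - 1 - (m : ℕ))) * τ ^ (m : ℕ))) * x := by
      intro m
      rw [LinearMap.smul_apply, smul_eq_mul]
      have hts : t = n * (m : ℕ) + n * (p - 1 - (m : ℕ)) := by
        rw [ht, ← Nat.mul_add]; congr 1; have := m.isLt; omega
      rw [show A ^ t * (algebraMap D R (d m) * (φ m) x)
          = algebraMap D R (d m) * (A ^ (n * (p - 1 - (m:ℕ))) * (A ^ (n * (m:ℕ)) * (φ m) x)) by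
        rw [hts, pow_add]; ring]
      rw [hφspec m x]
      ring
    rw [Finset.sum_congr rfl fun m _ => hterm m]
    rw [← Finset.sum_mul, ← hcsum]
    have := hApsi x.1 x.2
    simpa using this
  rw [hψeq]
  exact Submodule.sum_mem _ fun m _ =>
    Submodule.smul_mem _ _ (Submodule.subset_span ⟨m, rfl⟩)

end AuxKummer

/-- `Hom_{𝔇[ω]}(J_{n,h}, 𝔇[ω])`, identified with the fractional ideal `J_{n,h}⁻¹`, is
generated as a `𝔇[ω]`-module by `1, q₁, …, q_{p-1}`, where `qᵢ` is multiplication by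
`α^{-ni}(ω - h)^i`. -/

theorem hom_Jnh_generated
    (D : Type u) [CommRing D] [IsDomain D] [IsNoetherianRing D]
    (hGor : IsGorensteinRing D)
    (p : ℕ) (hp : p.Prime) (hpu : ¬ IsUnit (p : D))
    (a : D)
    (hass : associatedPrimes D (D ⧸ Ideal.span {(p : D)}) = {Ideal.span {a}})
    (k : ℕ) (hk1 : (p : D) ∈ Ideal.span {a ^ k}) (hk2 : (p : D) ∉ Ideal.span {a ^ (k + 1)})
    (f : D) (hfp : ¬ ∃ g : D, g ^ p = f)
    (hq : 1 ≤ Gamma (Ideal.span {a}) f p)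
    (n : ℕ) (hn : 0 < n)
    (hnle : ((n * (p - 1) : ℕ) : ℕ∞) ≤ min (Gamma (Ideal.span {a}) f p) (k : ℕ∞))
    (r : ℕ) (hr : (r : ℕ∞) = min (Gamma (Ideal.span {a}) f p) ((k : ℕ∞) + 1))
    (h : D) (hh : h ^ p - f ∈ Ideal.span {a ^ r}) :
    ∃ φ : Fin p → (↥(Jnh D p f n h a) →ₗ[Dw D p f] Dw D p f),
      (∀ (i : Fin p) (x : ↥(Jnh D p f n h a)),
        (algebraMap D (Dw D p f) a) ^ (n * (i : ℕ)) * φ i x =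
          (omegaSubH D p f h) ^ (i : ℕ) * (x : Dw D p f)) ∧
      (⊤ : Submodule (Dw D p f) (↥(Jnh D p f n h a) →ₗ[Dw D p f] Dw D p f)) =
        Submodule.span (Dw D p f) (Set.range φ) := by
  have htk : n * (p - 1) ≤ k := by
    have h1 := hnle.trans (min_le_right (Gamma (Ideal.span {a}) f p) (k : ℕ∞))
    exact_mod_cast h1
  have htr : n * (p - 1) ≤ r := by
    have h1 : ((n * (p - 1) : ℕ) : ℕ∞) ≤ (r : ℕ∞) := by
      rw [hr]
      exact le_min (hnle.trans (min_le_left _ _))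
        ((hnle.trans (min_le_right _ _)).trans le_self_add)
    exact_mod_cast h1
  exact main D p hp a k hk1 hk2 f n hn htk r htr h hh
end

section
/- In the following setup, J_{n,h} is a P-primary ideal of 𝔇[ω], where P := (α, ω − h)𝔇[ω] is the unique associated prime of the ideal p·𝔇[ω]. -/
open IsLocalRing

universe u v w x

set_option linter.unusedSectionVars false
namespace JnhProof
open Polynomial AdjoinRoot

variable {D : Type u} [CommRing D] [IsDomain D]

lemma mk_modByMonicHom {G : D[X]} (hG : G.Monic) (z : AdjoinRoot G) :
    AdjoinRoot.mk G (AdjoinRoot.modByMonicHom hG z) = z :=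
  AdjoinRoot.mk_leftInverse hG z

lemma degree_modByMonicHom_lt {G : D[X]} (hG : G.Monic) (z : AdjoinRoot G) :
    (AdjoinRoot.modByMonicHom hG z).degree < G.degree := by
  obtain ⟨q, rfl⟩ := AdjoinRoot.mk_surjective z
  rw [AdjoinRoot.modByMonicHom_mk]
  exact Polynomial.degree_modByMonic_lt q hG

lemma coeff_modByMonicHom_eq_zero {G : D[X]} (hG : G.Monic) {p : ℕ} (hdeg : G.natDegree = p)
    (z : AdjoinRoot G) {i : ℕ} (hi : p ≤ i) :
    (AdjoinRoot.modByMonicHom hG z).coeff i = 0 := by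
  apply Polynomial.coeff_eq_zero_of_degree_lt
  refine lt_of_lt_of_le (degree_modByMonicHom_lt hG z) ?_
  rw [Polynomial.degree_eq_natDegree hG.ne_zero, hdeg]
  exact_mod_cast hi

lemma degree_modByMonicHom_lt' {G : D[X]} (hG : G.Monic) {p : ℕ} (hdeg : G.natDegree = p)
    (z : AdjoinRoot G) :
    (AdjoinRoot.modByMonicHom hG z).degree < (p : WithBot ℕ) := by
  refine lt_of_lt_of_le (degree_modByMonicHom_lt hG z) ?_
  rw [Polynomial.degree_eq_natDegree hG.ne_zero, hdeg]

lemma modByMonicHom_root_mul {G : D[X]} (hG : G.Monic) {p : ℕ} (hdeg : G.natDegree = p)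
    (hp0 : 0 < p) (z : AdjoinRoot G) :
    AdjoinRoot.modByMonicHom hG (root G * z) =
      X * AdjoinRoot.modByMonicHom hG z
        - C ((AdjoinRoot.modByMonicHom hG z).coeff (p - 1)) * G := by
  set q := AdjoinRoot.modByMonicHom hG z with hq
  have hz : root G * z = AdjoinRoot.mk G (X * q) := by
    rw [map_mul, mk_X, mk_modByMonicHom hG]
  rw [hz, AdjoinRoot.modByMonicHom_mk]
  have hqd : q.degree < (p : WithBot ℕ) := degree_modByMonicHom_lt' hG hdeg z
  refine (Polynomial.div_modByMonic_unique (C (q.coeff (p - 1))) _ hG ⟨by ring, ?_⟩).2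
  have hGdeg : G.degree = (p : WithBot ℕ) := by
    rw [Polynomial.degree_eq_natDegree hG.ne_zero, hdeg]
  rw [hGdeg, Polynomial.degree_lt_iff_coeff_zero]
  intro m hm
  rcases hm.eq_or_lt with heq | hlt
  · subst heq
    have hm1 : p = (p - 1) + 1 := (Nat.succ_pred_eq_of_pos hp0).symm
    rw [coeff_sub, coeff_C_mul, hm1, Polynomial.coeff_X_mul, ← hm1]
    have : G.coeff p = 1 := by rw [← hdeg]; exact hG.coeff_natDegree
    rw [this, mul_one, sub_self]
  · have hm1 : m = (m - 1) + 1 := (Nat.succ_pred_eq_of_pos (lt_of_le_of_lt (Nat.zero_le p) hlt)).symm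
    rw [coeff_sub, coeff_C_mul, hm1, Polynomial.coeff_X_mul]
    have h1 : q.coeff (m - 1) = 0 := by
      apply Polynomial.coeff_eq_zero_of_degree_lt
      refine lt_of_lt_of_le hqd ?_
      exact_mod_cast Nat.le_sub_one_of_lt hlt
    have h2 : G.coeff ((m-1)+1) = 0 := by
      apply Polynomial.coeff_eq_zero_of_natDegree_lt
      omega
    rw [h1, h2, mul_zero, sub_self]

lemma self_eq_sum {G : D[X]} (hG : G.Monic) {p : ℕ} (hdeg : G.natDegree = p) (hp0 : 0 < p)
    (z : AdjoinRoot G) :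
    z = ∑ i ∈ Finset.range p,
        algebraMap D (AdjoinRoot G) ((AdjoinRoot.modByMonicHom hG z).coeff i) * root G ^ i := by
  conv_lhs => rw [← mk_modByMonicHom hG z]
  rw [← aeval_eq]
  have hnd : (AdjoinRoot.modByMonicHom hG z).natDegree < p := by
    rcases eq_or_ne (AdjoinRoot.modByMonicHom hG z) 0 with h0 | h0
    · simpa [h0] using hp0
    · rw [← hdeg]
      exact Polynomial.natDegree_lt_natDegree h0 (degree_modByMonicHom_lt hG z)
  rw [Polynomial.aeval_eq_sum_range' hnd]
  exact Finset.sum_congr rfl fun i _ => by rw [Algebra.smul_def]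


section W

variable (a : D) (n : ℕ) {G : D[X]} (hG : G.Monic) {p : ℕ}

/-- Coordinate divisibility condition. -/
def W (t : ℕ) (z : AdjoinRoot G) : Prop :=
  ∀ i, a ^ (n * (t - i)) ∣ (AdjoinRoot.modByMonicHom hG z).coeff i

lemma W_zero (z : AdjoinRoot G) : W a n hG 0 z := by
  intro i
  simp

lemma W_add {t : ℕ} {z₁ z₂ : AdjoinRoot G} (h1 : W a n hG t z₁) (h2 : W a n hG t z₂) :
    W a n hG t (z₁ + z₂) := by
  intro i
  rw [map_add, coeff_add]
  exact dvd_add (h1 i) (h2 i)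

lemma W_root_mul (hdeg : G.natDegree = p) (hp0 : 0 < p)
    (HG : ∀ i, i < p → a ^ (n * (p - 1)) ∣ G.coeff i)
    {t s : ℕ} (hsp : s ≤ p - 1) (hst : ∀ i, 1 ≤ i → n * (s - i) ≤ n * (t - (i - 1)))
    {z : AdjoinRoot G} (hz : W a n hG t z) : W a n hG s (root G * z) := by
  intro i
  by_cases hip : p ≤ i
  · rw [coeff_modByMonicHom_eq_zero hG hdeg _ hip]
    exact dvd_zero _
  push_neg at hip
  rw [modByMonicHom_root_mul hG hdeg hp0 z, coeff_sub]
  refine dvd_sub ?_ ?_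
  · rcases Nat.eq_zero_or_pos i with rfl | hi
    · rw [Polynomial.coeff_X_mul_zero]
      exact dvd_zero _
    · have hXq : (X * AdjoinRoot.modByMonicHom hG z).coeff i
          = (AdjoinRoot.modByMonicHom hG z).coeff (i - 1) := by
        conv_lhs => rw [show i = (i - 1) + 1 from (Nat.succ_pred_eq_of_pos hi).symm]
        rw [Polynomial.coeff_X_mul]
      rw [hXq]
      exact dvd_trans (pow_dvd_pow a (hst i hi)) (hz (i - 1))
  · rw [coeff_C_mul]
    have hle : n * (s - i) ≤ n * (p - 1) :=
      Nat.mul_le_mul_left n ((Nat.sub_le s i).trans hsp)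
    exact dvd_trans (pow_dvd_pow a hle) ((HG i hip).mul_left _)

lemma W_algebraMap_mul {t : ℕ} (d : D) {z : AdjoinRoot G} (hz : W a n hG t z) :
    W a n hG t (algebraMap D (AdjoinRoot G) d * z) := by
  intro i
  have hsm : algebraMap D (AdjoinRoot G) d * z = d • z := (Algebra.smul_def d z).symm
  rw [hsm, map_smul, Polynomial.coeff_smul, smul_eq_mul]
  exact (hz i).mul_left d

lemma W_apow_mul {t : ℕ} {z : AdjoinRoot G} (hz : W a n hG t z) :
    W a n hG (t + 1) ((algebraMap D (AdjoinRoot G) a) ^ n * z) := by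
  intro i
  have hsm : (algebraMap D (AdjoinRoot G) a) ^ n * z = (a ^ n) • z := by
    rw [Algebra.smul_def, map_pow]
  rw [hsm, map_smul, Polynomial.coeff_smul, smul_eq_mul]
  have h1 : n * (t + 1 - i) ≤ n + n * (t - i) := by
    have h2 : t + 1 - i ≤ (t - i) + 1 := by omega
    calc n * (t + 1 - i) ≤ n * ((t - i) + 1) := Nat.mul_le_mul_left n h2
    _ = n * (t - i) + n := by ring
    _ = n + n * (t - i) := by ring
  refine dvd_trans (pow_dvd_pow a h1) ?_
  rw [pow_add]
  exact mul_dvd_mul dvd_rfl (hz i)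

lemma W_mul (hdeg : G.natDegree = p) (hp0 : 0 < p)
    (HG : ∀ i, i < p → a ^ (n * (p - 1)) ∣ G.coeff i)
    {t : ℕ} (htp : t ≤ p - 1) (y : AdjoinRoot G) {z : AdjoinRoot G} (hz : W a n hG t z) :
    W a n hG t (y * z) := by
  induction y using AdjoinRoot.induction_on with
  | ih g =>
    induction g using Polynomial.induction_on with
    | C d =>
      have : (AdjoinRoot.mk G) (C d) = algebraMap D (AdjoinRoot G) d := rfl
      rw [this]
      exact W_algebraMap_mul a n hG d hz
    | add g1 g2 h1 h2 =>
      rw [map_add, add_mul]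
      exact W_add a n hG h1 h2
    | monomial k d ih =>
      have hrw : (AdjoinRoot.mk G) (C d * X ^ (k + 1)) * z
          = root G * ((AdjoinRoot.mk G) (C d * X ^ k) * z) := by
        rw [map_mul, map_mul, map_pow, map_pow, mk_X, pow_succ]
        ring
      rw [hrw]
      refine W_root_mul a n hG hdeg hp0 HG htp (fun i hi => ?_) ih
      exact Nat.mul_le_mul_left n (by omega)

lemma pow_le_W (hdeg : G.natDegree = p) (hp0 : 0 < p)
    (HG : ∀ i, i < p → a ^ (n * (p - 1)) ∣ G.coeff i)
    (t : ℕ) (htp : t ≤ p - 1) :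
    ∀ z ∈ (Ideal.span {root G, (algebraMap D (AdjoinRoot G) a) ^ n}) ^ t, W a n hG t z := by
  induction t with
  | zero =>
    intro z _
    exact W_zero a n hG z
  | succ t iht =>
    intro z hzmem
    rw [pow_succ] at hzmem
    refine Submodule.mul_induction_on hzmem ?_ ?_
    · intro x hx y hy
      obtain ⟨u, v, huv⟩ := Ideal.mem_span_pair.mp hy
      have hx' : W a n hG t x := iht (le_trans (Nat.le_succ t) htp) x hx
      have hxy : x * y = u * (root G * x) + v * ((algebraMap D (AdjoinRoot G) a) ^ n * x) := by
        rw [← huv]; ring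
      rw [hxy]
      refine W_add a n hG ?_ ?_
      · refine W_mul a n hG hdeg hp0 HG htp u ?_
        refine W_root_mul a n hG hdeg hp0 HG htp (fun i hi => ?_) hx'
        exact Nat.mul_le_mul_left n (by omega)
      · exact W_mul a n hG hdeg hp0 HG htp v (W_apow_mul a n hG hx')
    · intro x y hx hy
      exact W_add a n hG hx hy

set_option maxHeartbeats 1000000 in
lemma W_le_pow (hdeg : G.natDegree = p) (hp0 : 0 < p)
    {z : AdjoinRoot G} (hz : W a n hG (p - 1) z) :
    z ∈ (Ideal.span {root G, (algebraMap D (AdjoinRoot G) a) ^ n}) ^ (p - 1) := by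
  set I : Ideal (AdjoinRoot G) := Ideal.span {root G, (algebraMap D (AdjoinRoot G) a) ^ n}
    with hI
  have hrootI : root G ∈ I := Ideal.subset_span (Set.mem_insert _ _)
  have hapowI : (algebraMap D (AdjoinRoot G) a) ^ n ∈ I :=
    Ideal.subset_span (Set.mem_insert_iff.mpr (Or.inr rfl))
  rw [self_eq_sum hG hdeg hp0 z]
  refine Ideal.sum_mem _ fun i hi => ?_
  rw [Finset.mem_range] at hi
  obtain ⟨d, hd⟩ := hz i
  rw [hd, map_mul, map_pow, mul_comm (algebraMap D (AdjoinRoot G) a ^ (n * (p - 1 - i)))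
    (algebraMap D (AdjoinRoot G) d), mul_assoc]
  refine Ideal.mul_mem_left _ _ ?_
  have hsplit : algebraMap D (AdjoinRoot G) a ^ (n * (p - 1 - i)) * root G ^ i
      ∈ I ^ (p - 1 - i) * I ^ i := by
    refine Ideal.mul_mem_mul ?_ ?_
    · rw [pow_mul]
      exact Ideal.pow_mem_pow hapowI _
    · exact Ideal.pow_mem_pow hrootI _
  rwa [← pow_add, Nat.sub_add_cancel (by omega)] at hsplit

lemma mem_pow_iff_W (hdeg : G.natDegree = p) (hp0 : 0 < p)
    (HG : ∀ i, i < p → a ^ (n * (p - 1)) ∣ G.coeff i) (z : AdjoinRoot G) :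
    z ∈ (Ideal.span {root G, (algebraMap D (AdjoinRoot G) a) ^ n}) ^ (p - 1)
      ↔ W a n hG (p - 1) z :=
  ⟨fun h => pow_le_W a n hG hdeg hp0 HG (p - 1) le_rfl z h, fun h => W_le_pow a n hG hdeg hp0 h⟩

lemma mem_span_algebraMap_iff (hdeg : G.natDegree = p) (hp0 : 0 < p) (b : D) (z : AdjoinRoot G) :
    z ∈ Ideal.span {algebraMap D (AdjoinRoot G) b}
      ↔ ∀ i, b ∣ (AdjoinRoot.modByMonicHom hG z).coeff i := by
  constructor
  · intro hz i
    obtain ⟨y, hy⟩ := Ideal.mem_span_singleton'.mp hz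
    have : z = b • y := by rw [← hy, Algebra.smul_def]; ring
    rw [this, map_smul, Polynomial.coeff_smul, smul_eq_mul]
    exact Dvd.intro _ rfl
  · intro hdvd
    rw [self_eq_sum hG hdeg hp0 z]
    refine Ideal.sum_mem _ fun i hi => ?_
    obtain ⟨d, hd⟩ := hdvd i
    rw [hd, map_mul, mul_assoc]
    exact Ideal.mul_mem_right _ _ (Ideal.subset_span rfl)

end W

section Master

/-- Abstract uniqueness-of-associated-prime lemma. -/
lemma key_lemma {D : Type u} [CommRing D] {R : Type u} [CommRing R] [Algebra D R] [IsNoetherianRing R]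
    (a : D) (w : R) (T Q : Ideal R)
    (hdec : ∀ y : R, ∃ d : D, y - algebraMap D R d ∈ Ideal.span {algebraMap D R a, w})
    (hmemP : ∀ d : D, algebraMap D R d ∈ Ideal.span {algebraMap D R a, w} → a ∣ d)
    (hsat : ∀ (d : D) (z : R), ¬ a ∣ d → algebraMap D R d * z ∈ T → z ∈ T)
    (hac : ∃ (m : ℕ) (c' : D), ¬ a ∣ c' ∧ (algebraMap D R a) ^ m * algebraMap D R c' ∈ T)
    (hwT : ∃ mw : ℕ, 1 ≤ mw ∧ w ^ mw ∈ T ⊔ Ideal.span {algebraMap D R a})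
    (hQ : IsAssociatedPrime Q (R ⧸ T)) :
    Q = Ideal.span {algebraMap D R a, w} := by
  obtain ⟨hQpr, x₀, hx₀⟩ := isAssociatedPrime_iff.mp hQ
  obtain ⟨z, hzz⟩ := Ideal.Quotient.mk_surjective x₀
  have memQ : ∀ y, y ∈ Q ↔ y * z ∈ T := by
    intro y
    rw [hx₀, Submodule.mem_colon_singleton, Submodule.mem_bot, ← hzz]
    have h1 : y • (Ideal.Quotient.mk T z) = Ideal.Quotient.mk T (y * z) := rfl
    rw [h1, Ideal.Quotient.eq_zero_iff_mem]
  have hzT : z ∉ T := by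
    intro hzT
    apply hQpr.ne_top
    rw [Ideal.eq_top_iff_one, memQ, one_mul]
    exact hzT
  have hTQ : T ≤ Q := by
    intro t ht
    rw [memQ]
    exact Ideal.mul_mem_right z T ht
  have hdQ : ∀ d : D, algebraMap D R d ∈ Q → a ∣ d := by
    intro d hd
    by_contra hnd
    rw [memQ] at hd
    exact hzT (hsat d z hnd hd)
  have haQ : algebraMap D R a ∈ Q := by
    obtain ⟨m, c', hc', hmem⟩ := hac
    have h1 : (algebraMap D R a) ^ m * algebraMap D R c' ∈ Q := hTQ hmem
    rcases hQpr.mem_or_mem h1 with h2 | h2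
    · rcases m with _ | m
      · rw [pow_zero] at h2
        exact absurd ((Ideal.eq_top_iff_one _).mpr h2) hQpr.ne_top
      · exact hQpr.mem_of_pow_mem _ h2
    · exact absurd (hdQ c' h2) hc'
  have hwQ : w ∈ Q := by
    obtain ⟨mw, hmw1, hmem⟩ := hwT
    have h1 : T ⊔ Ideal.span {algebraMap D R a} ≤ Q := by
      refine sup_le hTQ ?_
      rw [Ideal.span_le]
      rintro x rfl
      exact haQ
    exact hQpr.mem_of_pow_mem _ (h1 hmem)
  have hPQ : Ideal.span {algebraMap D R a, w} ≤ Q := by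
    rw [Ideal.span_le]
    rintro x (rfl | rfl)
    · exact haQ
    · exact hwQ
  apply le_antisymm
  · intro y hy
    obtain ⟨d, hd⟩ := hdec y
    have h2 : algebraMap D R d ∈ Q := by
      have h5 := Q.sub_mem hy (hPQ hd)
      simpa using h5
    obtain ⟨d', hd'⟩ := hdQ d h2
    have h6 : algebraMap D R d ∈ Ideal.span {algebraMap D R a, w} := by
      rw [hd', map_mul]
      exact Ideal.mul_mem_right _ _ (Ideal.subset_span (Set.mem_insert _ _))
    have h7 := Ideal.add_mem _ hd h6
    simpa using h7
  · exact hPQ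

/-- The ring map `𝔇[ω] → 𝔇/(α)` (sending `ω ↦ h`) with kernel `P`. -/
lemma phi_exists {D : Type u} [CommRing D] [IsDomain D] (p : ℕ) (f h a : D)
    (hdvd : a ∣ h ^ p - f) :
    ∃ φ : Dw D p f →+* D ⧸ Ideal.span {a},
      (∀ d : D, φ (algebraMap D (Dw D p f) d) = Ideal.Quotient.mk (Ideal.span {a}) d) ∧
      (∀ g : D[X], φ (AdjoinRoot.mk _ g) = Ideal.Quotient.mk (Ideal.span {a}) (g.eval h)) ∧
      RingHom.ker φ = Ph D p f h a := by
  have hφeval : Polynomial.eval₂ (Ideal.Quotient.mk (Ideal.span {a}))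
      (Ideal.Quotient.mk (Ideal.span {a}) h) (X ^ p - C f : D[X]) = 0 := by
    rw [Polynomial.eval₂_sub, Polynomial.eval₂_pow, Polynomial.eval₂_X, Polynomial.eval₂_C]
    rw [← map_pow, ← map_sub, Ideal.Quotient.eq_zero_iff_mem, Ideal.mem_span_singleton]
    exact hdvd
  refine ⟨AdjoinRoot.lift (Ideal.Quotient.mk (Ideal.span {a}))
    (Ideal.Quotient.mk (Ideal.span {a}) h) hφeval, fun d => AdjoinRoot.lift_of hφeval,
    fun g => ?_, ?_⟩
  · rw [AdjoinRoot.lift_mk, Polynomial.eval₂_at_apply]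
  · set φ := AdjoinRoot.lift (Ideal.Quotient.mk (Ideal.span {a}))
      (Ideal.Quotient.mk (Ideal.span {a}) h) hφeval with hφdef
    have hφmk : ∀ g : D[X], φ (AdjoinRoot.mk _ g)
        = Ideal.Quotient.mk (Ideal.span {a}) (g.eval h) := by
      intro g
      rw [hφdef, AdjoinRoot.lift_mk, Polynomial.eval₂_at_apply]
    have hφalg : ∀ d : D, φ (algebraMap D (Dw D p f) d)
        = Ideal.Quotient.mk (Ideal.span {a}) d := fun d => AdjoinRoot.lift_of hφeval
    have hPhdef : Ph D p f h a = Ideal.span {algebraMap D (Dw D p f) a,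
        omegaSubH D p f h} := rfl
    apply le_antisymm
    · intro z hz
      obtain ⟨g, rfl⟩ := AdjoinRoot.mk_surjective z
      rw [RingHom.mem_ker, hφmk g, Ideal.Quotient.eq_zero_iff_mem,
        Ideal.mem_span_singleton] at hz
      obtain ⟨d, hd⟩ := hz
      obtain ⟨u, hu⟩ := Polynomial.X_sub_C_dvd_sub_C_eval (a := h) (p := g)
      have hgu : g = (X - C h) * u + C (g.eval h) := by rw [← hu]; ring
      rw [hgu, map_add, map_mul, hPhdef]
      refine Ideal.add_mem _ (Ideal.mul_mem_right _ _ ?_) ?_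
      · have h1 : AdjoinRoot.mk _ (X - C h : D[X]) = omegaSubH D p f h := by
          rw [map_sub, AdjoinRoot.mk_X, AdjoinRoot.mk_C]
          rfl
        rw [h1]
        exact Ideal.subset_span (Set.mem_insert_iff.mpr (Or.inr rfl))
      · have h2 : AdjoinRoot.mk _ (C (g.eval h) : D[X])
            = algebraMap D (Dw D p f) a * algebraMap D (Dw D p f) d := by
          rw [AdjoinRoot.mk_C, hd, map_mul]
          rfl
        rw [h2]
        exact Ideal.mul_mem_right _ _ (Ideal.subset_span (Set.mem_insert _ _))
    · rw [hPhdef, Ideal.span_le]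
      rintro x (rfl | rfl)
      · rw [SetLike.mem_coe, RingHom.mem_ker, hφalg a, Ideal.Quotient.eq_zero_iff_mem]
        exact Ideal.subset_span rfl
      · rw [SetLike.mem_coe, RingHom.mem_ker]
        show φ (AdjoinRoot.root _ - algebraMap D (Dw D p f) h) = 0
        rw [map_sub, hφalg h, hφdef, AdjoinRoot.lift_root, sub_self]

/-- The translation isomorphism between `𝔇[ω]` and `AdjoinRoot ((X+h)^p - f)`. -/
lemma equiv_exists {D : Type u} [CommRing D] [IsDomain D] (p : ℕ) (f h : D) {G : D[X]}
    (hGdef : G = (X + C h) ^ p - C f) :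
    ∃ (e : Dw D p f →ₐ[D] AdjoinRoot G) (e' : AdjoinRoot G →ₐ[D] Dw D p f),
      (∀ z, e' (e z) = z) ∧ e (omegaSubH D p f h) = AdjoinRoot.root G ∧
      e' (AdjoinRoot.root G) = omegaSubH D p f h := by
  have hGroot : Polynomial.aeval (AdjoinRoot.root G) G = 0 := by
    rw [AdjoinRoot.aeval_eq, AdjoinRoot.mk_self]
  have hFroot : Polynomial.aeval (AdjoinRoot.root (X ^ p - C f : D[X]))
      (X ^ p - C f : D[X]) = 0 := by
    rw [AdjoinRoot.aeval_eq, AdjoinRoot.mk_self]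
  have hFroot' : (AdjoinRoot.root (X ^ p - C f : D[X])) ^ p
      - algebraMap D (Dw D p f) f = 0 := by
    simpa only [map_sub, map_pow, Polynomial.aeval_X, Polynomial.aeval_C] using hFroot
  have heval1 : Polynomial.aeval (AdjoinRoot.root G + algebraMap D (AdjoinRoot G) h)
      (X ^ p - C f : D[X]) = 0 := by
    have h2 : Polynomial.aeval (AdjoinRoot.root G) G
        = (AdjoinRoot.root G + algebraMap D (AdjoinRoot G) h) ^ p
          - algebraMap D (AdjoinRoot G) f := by
      rw [hGdef]
      simp [map_sub, map_pow, map_add]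
    simp only [map_sub, map_pow, Polynomial.aeval_X, Polynomial.aeval_C]
    rw [← h2, hGroot]
  have heval2 : Polynomial.aeval (AdjoinRoot.root (X ^ p - C f : D[X])
      - algebraMap D (Dw D p f) h) G = 0 := by
    have h3 : Polynomial.aeval (AdjoinRoot.root (X ^ p - C f : D[X])
        - algebraMap D (Dw D p f) h) G
        = (AdjoinRoot.root (X ^ p - C f : D[X])) ^ p - algebraMap D (Dw D p f) f := by
      rw [hGdef]
      simp [map_sub, map_pow, map_add, sub_add_cancel]
    rw [h3, hFroot']
  refine ⟨AdjoinRoot.liftAlgHom _ (Algebra.ofId _ _) _ heval1, AdjoinRoot.liftAlgHom _ (Algebra.ofId _ _) _ heval2, ?_, ?_, ?_⟩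
  · have hcomp : (AdjoinRoot.liftAlgHom _ (Algebra.ofId _ _) _ heval2).comp (AdjoinRoot.liftAlgHom _ (Algebra.ofId _ _) _ heval1)
        = AlgHom.id D (Dw D p f) := by
      apply AdjoinRoot.algHom_ext
      rw [AlgHom.comp_apply, AdjoinRoot.liftAlgHom_root _ _ _ heval1, map_add,
        AdjoinRoot.liftAlgHom_root _ _ _ heval2,
        AlgHom.commutes, AlgHom.id_apply]
      ring
    intro z
    calc (AdjoinRoot.liftAlgHom _ (Algebra.ofId _ _) _ heval2) ((AdjoinRoot.liftAlgHom _ (Algebra.ofId _ _) _ heval1) z)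
        = ((AdjoinRoot.liftAlgHom _ (Algebra.ofId _ _) _ heval2).comp (AdjoinRoot.liftAlgHom _ (Algebra.ofId _ _) _ heval1)) z := rfl
    _ = z := by rw [hcomp]; rfl
  · show (AdjoinRoot.liftAlgHom _ (Algebra.ofId _ _) _ heval1)
        (AdjoinRoot.root _ - algebraMap D (Dw D p f) h) = _
    rw [map_sub, AdjoinRoot.liftAlgHom_root _ _ _ heval1, AlgHom.commutes]
    ring
  · exact AdjoinRoot.liftAlgHom_root _ _ _ heval2

/-- `θ^p` lies in `(α)` in the translated ring. -/
lemma theta_pow_mem {D : Type u} [CommRing D] [IsDomain D] {G : D[X]} (hGm : G.Monic)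
    {p : ℕ} (hGdeg : G.natDegree = p) (hp0 : 0 < p) (a : D) {n : ℕ} (hn1 : 1 ≤ n * (p - 1))
    (HG : ∀ i, i < p → a ^ (n * (p - 1)) ∣ G.coeff i) :
    (AdjoinRoot.root G) ^ p ∈ Ideal.span {algebraMap D (AdjoinRoot G) a} := by
  rw [mem_span_algebraMap_iff hGm hGdeg hp0 a]
  have hXp : AdjoinRoot.modByMonicHom hGm ((AdjoinRoot.root G) ^ p) = X ^ p - G := by
    have h1 : (AdjoinRoot.root G) ^ p = AdjoinRoot.mk G (X ^ p) := by
      rw [map_pow, AdjoinRoot.mk_X]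
    rw [h1, AdjoinRoot.modByMonicHom_mk]
    refine (Polynomial.div_modByMonic_unique 1 _ hGm ⟨by ring, ?_⟩).2
    rw [Polynomial.degree_eq_natDegree hGm.ne_zero, hGdeg,
      Polynomial.degree_lt_iff_coeff_zero]
    intro m hm
    rcases hm.eq_or_lt with heq | hlt
    · subst heq
      rw [coeff_sub, Polynomial.coeff_X_pow, if_pos rfl]
      have h2 : G.coeff p = 1 := by rw [← hGdeg]; exact hGm.coeff_natDegree
      rw [h2, sub_self]
    · rw [coeff_sub, Polynomial.coeff_X_pow, if_neg (by omega),
        Polynomial.coeff_eq_zero_of_natDegree_lt (by omega), sub_self]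
  intro i
  rw [hXp, coeff_sub, Polynomial.coeff_X_pow]
  rcases lt_trichotomy i p with hip | hip | hip
  · rw [if_neg (by omega), zero_sub, dvd_neg]
    exact (dvd_pow_self a (by omega : n * (p - 1) ≠ 0)).trans (HG i hip)
  · subst hip
    have h2 : G.coeff i = 1 := by rw [← hGdeg]; exact hGm.coeff_natDegree
    rw [if_pos rfl, h2, sub_self]
    exact dvd_zero a
  · rw [if_neg (by omega), Polynomial.coeff_eq_zero_of_natDegree_lt (by omega), sub_self]
    exact dvd_zero a

end Master

section Final

set_option maxHeartbeats 2000000 in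
theorem master {D : Type u} [CommRing D] [IsDomain D] [IsNoetherianRing D]
    (p : ℕ) (hp : p.Prime) (a : D)
    (hass : associatedPrimes D (D ⧸ Ideal.span {(p : D)}) = {Ideal.span {a}})
    (k : ℕ) (hk1 : (p : D) ∈ Ideal.span {a ^ k}) (hk2 : (p : D) ∉ Ideal.span {a ^ (k + 1)})
    (f : D) (n : ℕ) (hn : 0 < n) (hkge : n * (p - 1) ≤ k)
    (h : D) (hhr : a ^ (n * (p - 1)) ∣ h ^ p - f) :
    (Jnh D p f n h a).IsPrimary ∧ (Jnh D p f n h a).radical = Ph D p f h a ∧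
      associatedPrimes (Dw D p f) ((Dw D p f) ⧸ Ideal.span {(p : Dw D p f)}) =
        {Ph D p f h a} := by
  have hJnhdef : Jnh D p f n h a = (Ideal.span {omegaSubH D p f h,
      (algebraMap D (Dw D p f) a) ^ n}) ^ (p - 1) := rfl
  have hPhdef : Ph D p f h a = Ideal.span {algebraMap D (Dw D p f) a,
      omegaSubH D p f h} := rfl
  have hp0 : 0 < p := hp.pos
  have hp2 : 2 ≤ p := hp.two_le
  have hnp1 : 1 ≤ n * (p - 1) := Nat.mul_pos hn (by omega)
  have hk1' : a ^ k ∣ (p : D) := Ideal.mem_span_singleton.mp hk1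
  have hpD0 : (p : D) ≠ 0 := by
    intro h0; exact hk2 (by rw [h0]; exact Ideal.zero_mem _)
  have hk01 : 1 ≤ k := le_trans hnp1 hkge
  have ha0 : a ≠ 0 := by
    intro h0
    apply hpD0
    have h1 := hk1'
    rw [h0, zero_pow (by omega)] at h1
    exact zero_dvd_iff.mp h1
  have hmemass : Ideal.span {a} ∈ associatedPrimes D (D ⧸ Ideal.span {(p : D)}) := by
    rw [hass]; rfl
  have hspan_a_prime : (Ideal.span {a}).IsPrime := (AssociatedPrimes.mem_iff.mp hmemass).isPrime
  have haprime : Prime a := (Ideal.span_singleton_prime ha0).mp hspan_a_prime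
  obtain ⟨c, hc⟩ := hk1'
  have hcnd : ¬ a ∣ c := by
    rintro ⟨c', hc'⟩
    apply hk2
    rw [Ideal.mem_span_singleton]
    exact ⟨c', by rw [hc, hc', pow_succ]; ring⟩
  -- D-level saturation at (p)
  have sat_p : ∀ d x : D, ¬ a ∣ d → (p : D) ∣ d * x → (p : D) ∣ x := by
    intro d x hd hdx
    by_contra hx
    have hx0 : (Ideal.Quotient.mk (Ideal.span {(p : D)}) x) ≠ 0 := by
      rw [Ne, Ideal.Quotient.eq_zero_iff_mem, Ideal.mem_span_singleton]; exact hx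
    obtain ⟨P', hP', hle⟩ := exists_le_isAssociatedPrime_of_isNoetherianRing D _ hx0
    have hP'eq : P' = Ideal.span {a} := by
      have h1 := AssociatedPrimes.mem_iff.mpr hP'
      rw [hass] at h1; exact h1
    have hdm : d ∈ (⊥ : Submodule D (D ⧸ Ideal.span {(p : D)})).colon
        {(Ideal.Quotient.mk (Ideal.span {(p : D)}) x)} := by
      rw [Submodule.mem_colon_singleton, Submodule.mem_bot]
      have h2 : d • (Ideal.Quotient.mk (Ideal.span {(p : D)}) x)
          = Ideal.Quotient.mk _ (d * x) := rfl
      rw [h2, Ideal.Quotient.eq_zero_iff_mem, Ideal.mem_span_singleton]; exact hdx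
    have h3 := hle hdm
    rw [hP'eq, Ideal.mem_span_singleton] at h3
    exact hd h3
  have sat_a : ∀ (m : ℕ) (d x : D), ¬ a ∣ d → a ^ m ∣ d * x → a ^ m ∣ x :=
    fun m d x hd hdx => haprime.pow_dvd_of_dvd_mul_left m hd hdx
  -- the translated polynomial G
  set G : D[X] := (X + C h) ^ p - C f with hGdef
  have hGm : G.Monic := by
    have h1 : ((X + C h : D[X]) ^ p).Monic := (monic_X_add_C h).pow p
    have h2 : (-C f : D[X]).degree < ((X + C h : D[X]) ^ p).degree := by
      refine lt_of_le_of_lt (le_trans (le_of_eq (degree_neg (C f))) degree_C_le) ?_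
      rw [Polynomial.degree_eq_natDegree h1.ne_zero, Polynomial.natDegree_pow,
        natDegree_X_add_C, mul_one]
      exact_mod_cast hp0
    have h3 : G = (X + C h) ^ p + -C f := by rw [hGdef, sub_eq_add_neg]
    rw [h3]
    exact h1.add_of_left h2
  have hGdeg : G.natDegree = p := by
    rw [hGdef, natDegree_sub_C, Polynomial.natDegree_pow, natDegree_X_add_C, mul_one]
  have HG : ∀ i, i < p → a ^ (n * (p - 1)) ∣ G.coeff i := by
    intro i hip
    have hGc : G.coeff i = h ^ (p - i) * (Nat.choose p i : D) - (C f).coeff i := by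
      rw [hGdef, coeff_sub, Polynomial.coeff_X_add_C_pow]
    rcases Nat.eq_zero_or_pos i with rfl | hi
    · have h1 : G.coeff 0 = h ^ p - f := by
        rw [hGc]; simp
      rw [h1]; exact hhr
    · have hC : (C f).coeff i = 0 := by rw [Polynomial.coeff_C, if_neg (by omega)]
      have hch : (p : D) ∣ (Nat.choose p i : D) :=
        Nat.cast_dvd_cast (Nat.Prime.dvd_choose_self hp (by omega) hip)
      have hap : a ^ (n * (p - 1)) ∣ (p : D) :=
        (pow_dvd_pow a hkge).trans ⟨c, hc⟩
      rw [hGc, hC, sub_zero]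
      exact (hap.trans hch).mul_left _
  obtain ⟨e, e', he'e, hew, he'w⟩ := equiv_exists p f h hGdef
  -- ideal transfers
  have heapow : e ((algebraMap D (Dw D p f) a) ^ n) = (algebraMap D (AdjoinRoot G) a) ^ n := by
    rw [map_pow, AlgHom.commutes]
  have he'apow : e' ((algebraMap D (AdjoinRoot G) a) ^ n)
      = (algebraMap D (Dw D p f) a) ^ n := by
    rw [map_pow, AlgHom.commutes]
  have hmapJ : Ideal.map e (Jnh D p f n h a)
      = (Ideal.span {AdjoinRoot.root G, (algebraMap D (AdjoinRoot G) a) ^ n}) ^ (p - 1) := by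
    rw [hJnhdef, Ideal.map_pow, Ideal.map_span, Set.image_pair, hew, heapow]
  have hmapJ' : Ideal.map e'
      ((Ideal.span {AdjoinRoot.root G, (algebraMap D (AdjoinRoot G) a) ^ n}) ^ (p - 1))
      = Jnh D p f n h a := by
    rw [hJnhdef, Ideal.map_pow, Ideal.map_span, Set.image_pair, he'w, he'apow]
  have hmemJ : ∀ z, z ∈ Jnh D p f n h a ↔ e z
      ∈ (Ideal.span {AdjoinRoot.root G, (algebraMap D (AdjoinRoot G) a) ^ n}) ^ (p - 1) := by
    intro z
    constructor
    · intro hz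
      rw [← hmapJ]
      exact Ideal.mem_map_of_mem e hz
    · intro hz
      have h1 := Ideal.mem_map_of_mem e' hz
      rw [hmapJ'] at h1
      rwa [he'e z] at h1
  have hmapp : Ideal.map e (Ideal.span {((p : ℕ) : Dw D p f)})
      = Ideal.span {((p : ℕ) : AdjoinRoot G)} := by
    rw [Ideal.map_span, Set.image_singleton, map_natCast]
  have hmapp' : Ideal.map e' (Ideal.span {((p : ℕ) : AdjoinRoot G)})
      = Ideal.span {((p : ℕ) : Dw D p f)} := by
    rw [Ideal.map_span, Set.image_singleton, map_natCast]
  have hmemp : ∀ z, z ∈ Ideal.span {((p : ℕ) : Dw D p f)}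
      ↔ e z ∈ Ideal.span {((p : ℕ) : AdjoinRoot G)} := by
    intro z
    constructor
    · intro hz
      rw [← hmapp]
      exact Ideal.mem_map_of_mem e hz
    · intro hz
      have h1 := Ideal.mem_map_of_mem e' hz
      rw [hmapp'] at h1
      rwa [he'e z] at h1
  -- coordinate characterizations
  have hcoJ : ∀ z : Dw D p f, z ∈ Jnh D p f n h a ↔
      ∀ i, a ^ (n * (p - 1 - i)) ∣ (AdjoinRoot.modByMonicHom hGm (e z)).coeff i := by
    intro z
    rw [hmemJ z]
    exact mem_pow_iff_W a n hGm hGdeg hp0 HG (e z)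
  have hexp : ∀ z : Dw D p f, z ∈ Ideal.span {((p : ℕ) : Dw D p f)} ↔
      ∀ i, (p : D) ∣ (AdjoinRoot.modByMonicHom hGm (e z)).coeff i := by
    intro z
    rw [hmemp z]
    have hb : ((p : ℕ) : AdjoinRoot G) = algebraMap D (AdjoinRoot G) ((p : ℕ) : D) :=
      (map_natCast (algebraMap D (AdjoinRoot G)) p).symm
    rw [hb]
    exact mem_span_algebraMap_iff hGm hGdeg hp0 ((p : ℕ) : D) (e z)
  have hwp : (omegaSubH D p f h) ^ p ∈ Ideal.span {algebraMap D (Dw D p f) a} := by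
    have h1 : (omegaSubH D p f h) ^ p = e' ((AdjoinRoot.root G) ^ p) := by
      rw [map_pow, he'w]
    have h2 := Ideal.mem_map_of_mem e' (theta_pow_mem hGm hGdeg hp0 a hnp1 HG)
    rw [Ideal.map_span, Set.image_singleton, AlgHom.commutes] at h2
    rw [h1]
    exact h2
  -- the ring hom φ and primality of P
  obtain ⟨φ, hφalg, hφmk, hker⟩ := phi_exists p f h a
    ((dvd_pow_self a (by omega : n * (p - 1) ≠ 0)).trans hhr)
  haveI hdom : IsDomain (D ⧸ Ideal.span {a}) := by
    haveI := hspan_a_prime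
    infer_instance
  have hPprime : (Ph D p f h a).IsPrime := by
    rw [← hker]
    exact RingHom.ker_isPrime φ
  have hPne : Ph D p f h a ≠ ⊤ := hPprime.ne_top
  have haP : algebraMap D (Dw D p f) a ∈ Ph D p f h a := by
    rw [hPhdef]
    exact Ideal.subset_span (Set.mem_insert _ _)
  have hwP : omegaSubH D p f h ∈ Ph D p f h a := by
    rw [hPhdef]
    exact Ideal.subset_span (Set.mem_insert_iff.mpr (Or.inr rfl))
  -- decomposition and contraction facts needed by key_lemma
  have hdec : ∀ y : Dw D p f, ∃ d : D, y - algebraMap D (Dw D p f) d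
      ∈ Ideal.span {algebraMap D (Dw D p f) a, omegaSubH D p f h} := by
    intro y
    obtain ⟨g, rfl⟩ := AdjoinRoot.mk_surjective y
    refine ⟨g.eval h, ?_⟩
    rw [← hPhdef, ← hker, RingHom.mem_ker, map_sub, hφmk g, hφalg, sub_self]
  have hmemPa : ∀ d : D, algebraMap D (Dw D p f) d
      ∈ Ideal.span {algebraMap D (Dw D p f) a, omegaSubH D p f h} → a ∣ d := by
    intro d hd
    rw [← hPhdef, ← hker, RingHom.mem_ker, hφalg, Ideal.Quotient.eq_zero_iff_mem,
      Ideal.mem_span_singleton] at hd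
    exact hd
  -- saturation for J
  have hsatJ : ∀ (d : D) (z : Dw D p f), ¬ a ∣ d →
      algebraMap D (Dw D p f) d * z ∈ Jnh D p f n h a → z ∈ Jnh D p f n h a := by
    intro d z hd hdz
    rw [hcoJ] at hdz ⊢
    intro i
    have h1 := hdz i
    have h2 : e (algebraMap D (Dw D p f) d * z) = d • (e z) := by
      rw [map_mul, AlgHom.commutes, Algebra.smul_def]
    rw [h2, map_smul, Polynomial.coeff_smul, smul_eq_mul] at h1
    exact sat_a _ d _ hd h1
  -- saturation for (p)
  have hsatp : ∀ (d : D) (z : Dw D p f), ¬ a ∣ d →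
      algebraMap D (Dw D p f) d * z ∈ Ideal.span {((p : ℕ) : Dw D p f)} →
      z ∈ Ideal.span {((p : ℕ) : Dw D p f)} := by
    intro d z hd hdz
    rw [hexp] at hdz ⊢
    intro i
    have h1 := hdz i
    have h2 : e (algebraMap D (Dw D p f) d * z) = d • (e z) := by
      rw [map_mul, AlgHom.commutes, Algebra.smul_def]
    rw [h2, map_smul, Polynomial.coeff_smul, smul_eq_mul] at h1
    exact sat_p d _ hd h1
  have hJle : Jnh D p f n h a ≤ Ph D p f h a := by
    rw [hJnhdef]
    refine le_trans (Ideal.pow_le_self (by omega)) ?_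
    rw [Ideal.span_le]
    rintro x (rfl | rfl)
    · exact hwP
    · exact Ideal.pow_mem_of_mem _ haP n hn
  have hwpowJ : (omegaSubH D p f h) ^ (p - 1) ∈ Jnh D p f n h a := by
    rw [hJnhdef]
    exact Ideal.pow_mem_pow (Ideal.subset_span (Set.mem_insert _ _)) _
  have hapowJ : (algebraMap D (Dw D p f) a) ^ (n * (p - 1))
      * algebraMap D (Dw D p f) (1 : D) ∈ Jnh D p f n h a := by
    have hmem : (algebraMap D (Dw D p f) a) ^ n ∈ Ideal.span {omegaSubH D p f h,
        (algebraMap D (Dw D p f) a) ^ n} :=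
      Ideal.subset_span (Set.mem_insert_iff.mpr (Or.inr rfl))
    rw [map_one (algebraMap D (Dw D p f)), mul_one,
      pow_mul (algebraMap D (Dw D p f) a) n (p - 1), hJnhdef]
    exact Ideal.pow_mem_pow hmem _
  -- radical of J
  have hradJ : (Jnh D p f n h a).radical = Ph D p f h a := by
    rw [hJnhdef, Ideal.radical_pow _ (by omega : p - 1 ≠ 0)]
    apply le_antisymm
    · have h1 : Ideal.span {omegaSubH D p f h, (algebraMap D (Dw D p f) a) ^ n}
          ≤ Ph D p f h a := by
        rw [Ideal.span_le]
        rintro x (rfl | rfl)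
        · exact hwP
        · exact Ideal.pow_mem_of_mem _ haP n hn
      refine le_trans (Ideal.radical_mono h1) ?_
      rw [hPprime.radical]
    · rw [hPhdef, Ideal.span_le]
      have hmem1 : (algebraMap D (Dw D p f) a) ^ n ∈ Ideal.span {omegaSubH D p f h,
          (algebraMap D (Dw D p f) a) ^ n} :=
        Ideal.subset_span (Set.mem_insert_iff.mpr (Or.inr rfl))
      have hmem2 : omegaSubH D p f h ∈ Ideal.span {omegaSubH D p f h,
          (algebraMap D (Dw D p f) a) ^ n} :=
        Ideal.subset_span (Set.mem_insert _ _)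
      rintro x (rfl | rfl)
      · exact Ideal.mem_radical_of_pow_mem (Ideal.le_radical hmem1)
      · exact Ideal.le_radical hmem2
  have hJneTop : Jnh D p f n h a ≠ ⊤ := fun htop => hPne (top_le_iff.mp (htop ▸ hJle))
  -- conclusion 1 : primary
  have hprimary : (Jnh D p f n h a).IsPrimary := by
    rw [Ideal.isPrimary_iff]
    refine ⟨hJneTop, ?_⟩
    intro x y hxy
    by_cases hx : x ∈ Jnh D p f n h a
    · exact Or.inl hx
    · right
      rw [hradJ]
      have hx0 : (Ideal.Quotient.mk (Jnh D p f n h a) x) ≠ 0 := by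
        rw [Ne, Ideal.Quotient.eq_zero_iff_mem]
        exact hx
      obtain ⟨Q, hQ, hle⟩ :=
        exists_le_isAssociatedPrime_of_isNoetherianRing (Dw D p f) _ hx0
      have hQP : Q = Ideal.span {algebraMap D (Dw D p f) a, omegaSubH D p f h} := by
        refine key_lemma a (omegaSubH D p f h) (Jnh D p f n h a) Q hdec hmemPa hsatJ
          ⟨n * (p - 1), 1, fun hdvd => haprime.not_unit (isUnit_of_dvd_one hdvd), hapowJ⟩
          ⟨p - 1, by omega, Ideal.mem_sup_left hwpowJ⟩ hQ
      have hyann : y ∈ (⊥ : Submodule (Dw D p f) (Dw D p f ⧸ Jnh D p f n h a)).colon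
          {(Ideal.Quotient.mk (Jnh D p f n h a) x)} := by
        rw [Submodule.mem_colon_singleton, Submodule.mem_bot]
        have h1 : y • (Ideal.Quotient.mk (Jnh D p f n h a) x)
            = Ideal.Quotient.mk (Jnh D p f n h a) (y * x) := rfl
        rw [h1, Ideal.Quotient.eq_zero_iff_mem, mul_comm]
        exact hxy
      have h2 := hle hyann
      rw [hQP, ← hPhdef] at h2
      exact h2
  -- conclusion 3 : associated primes of Dw/(p)
  have hpinP : ((p : ℕ) : Dw D p f) ∈ Ph D p f h a := by
    have h1 : ((p : ℕ) : Dw D p f) = algebraMap D (Dw D p f) ((p : ℕ) : D) :=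
      (map_natCast (algebraMap D (Dw D p f)) p).symm
    rw [h1, hc, map_mul (algebraMap D (Dw D p f)) (a ^ k) c,
      map_pow (algebraMap D (Dw D p f)) a k]
    exact Ideal.mul_mem_right _ _ (Ideal.pow_mem_of_mem _ haP k (by omega))
  have hpspan_le : Ideal.span {((p : ℕ) : Dw D p f)} ≤ Ph D p f h a := by
    rw [Ideal.span_le]
    rintro x rfl
    exact hpinP
  have hpne : Ideal.span {((p : ℕ) : Dw D p f)} ≠ ⊤ :=
    fun htop => hPne (top_le_iff.mp (htop ▸ hpspan_le))
  have hacp : (algebraMap D (Dw D p f) a) ^ k * algebraMap D (Dw D p f) c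
      ∈ Ideal.span {((p : ℕ) : Dw D p f)} := by
    have h1 : (algebraMap D (Dw D p f) a) ^ k * algebraMap D (Dw D p f) c
        = ((p : ℕ) : Dw D p f) := by
      rw [← map_pow (algebraMap D (Dw D p f)) a k,
        ← map_mul (algebraMap D (Dw D p f)) (a ^ k) c, ← hc,
        map_natCast (algebraMap D (Dw D p f)) p]
    rw [h1]
    exact Ideal.subset_span rfl
  have hassQ : ∀ Q : Ideal (Dw D p f),
      IsAssociatedPrime Q ((Dw D p f) ⧸ Ideal.span {((p : ℕ) : Dw D p f)}) →
      Q = Ph D p f h a := by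
    intro Q hQ
    rw [hPhdef]
    exact key_lemma a (omegaSubH D p f h) _ Q hdec hmemPa hsatp ⟨k, c, hcnd, hacp⟩
      ⟨p, by omega, Ideal.mem_sup_right hwp⟩ hQ
  have hass2 : associatedPrimes (Dw D p f)
      ((Dw D p f) ⧸ Ideal.span {((p : ℕ) : Dw D p f)}) = {Ph D p f h a} := by
    ext Q
    constructor
    · intro hQ
      exact hassQ Q (AssociatedPrimes.mem_iff.mp hQ)
    · intro hQ
      rw [Set.mem_singleton_iff] at hQ
      subst hQ
      haveI : Nontrivial ((Dw D p f) ⧸ Ideal.span {((p : ℕ) : Dw D p f)}) :=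
        Ideal.Quotient.nontrivial_iff.mpr hpne
      obtain ⟨Q₀, hQ₀⟩ := associatedPrimes.nonempty (Dw D p f)
        ((Dw D p f) ⧸ Ideal.span {((p : ℕ) : Dw D p f)})
      have h1 := hassQ Q₀ (AssociatedPrimes.mem_iff.mp hQ₀)
      rw [← h1]
      exact hQ₀
  exact ⟨hprimary, hradJ, hass2⟩

end Final



end JnhProof



set_option maxHeartbeats 1600000 in
set_option maxHeartbeats 1000000 in
/-- `J_{n,h}` is a `P`-primary ideal, where `P = (α, ω - h)` is the unique associated prime
of `p·𝔇[ω]`. -/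
theorem Jnh_isPrimary
    (D : Type u) [CommRing D] [IsDomain D] [IsNoetherianRing D]
    (hGor : IsGorensteinRing D)
    (p : ℕ) (hp : p.Prime) (hpu : ¬ IsUnit (p : D))
    (a : D)
    (hass : associatedPrimes D (D ⧸ Ideal.span {(p : D)}) = {Ideal.span {a}})
    (k : ℕ) (hk1 : (p : D) ∈ Ideal.span {a ^ k}) (hk2 : (p : D) ∉ Ideal.span {a ^ (k + 1)})
    (f : D) (hfp : ¬ ∃ g : D, g ^ p = f)
    (hq : 1 ≤ Gamma (Ideal.span {a}) f p)
    (n : ℕ) (hn : 0 < n)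
    (hnle : ((n * (p - 1) : ℕ) : ℕ∞) ≤ min (Gamma (Ideal.span {a}) f p) (k : ℕ∞))
    (r : ℕ) (hr : (r : ℕ∞) = min (Gamma (Ideal.span {a}) f p) ((k : ℕ∞) + 1))
    (h : D) (hh : h ^ p - f ∈ Ideal.span {a ^ r}) :
    (Jnh D p f n h a).IsPrimary ∧ (Jnh D p f n h a).radical = Ph D p f h a ∧
      associatedPrimes (Dw D p f) ((Dw D p f) ⧸ Ideal.span {(p : Dw D p f)}) =
        {Ph D p f h a} := by
  have hkge : n * (p - 1) ≤ k := by
    have hcast : ((n * (p - 1) : ℕ) : ℕ∞) ≤ (k : ℕ∞) := le_trans hnle (min_le_right _ _)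
    exact_mod_cast hcast
  have hrge : n * (p - 1) ≤ r := by
    have hcast : ((n * (p - 1) : ℕ) : ℕ∞) ≤ (r : ℕ∞) := by
      rw [hr]
      exact le_trans hnle (le_min (min_le_left _ _)
        (le_trans (min_le_right _ _) le_self_add))
    exact_mod_cast hcast
  have hhr : a ^ (n * (p - 1)) ∣ h ^ p - f :=
    (pow_dvd_pow a hrge).trans (Ideal.mem_span_singleton.mp hh)
  exact JnhProof.master p hp a hass k hk1 hk2 f n hn hkge h hhr
end
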